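/- arXiv:2203.11929 — 2 statements merged into one kernel-verified Lean document; each statement's English description precedes it below -/
import Mathlib

section
/- Let (F,Ω,⋆) be a stratified fusion system on a group S, let Γ be an F-closed set of subgroups of S such that F is Γ-inductive, and let X ∈ Γ. Suppose that X⋆ is fully normalized in (F,Ω,⋆). Then there exists an N_F(X⋆)-conjugate X′ of X (i.e. the image of X under an N_F(X⋆)-isomorphism) such that X′ is fully normalized in (F,Ω,⋆). Moreover, for any such X′ one has X⋆ = (X′)⋆, and X′ is fully normalized in N_F(X⋆). -/
/-- `F f X Y` asserts that the function `f : S → S` (through its restriction to `X`)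
is an `F`-homomorphism from the subgroup `X` to the subgroup `Y`. -/
abbrev HomPred (S : Type*) [Group S] := (S → S) → Subgroup S → Subgroup S → Prop

/-- A fusion system, with hom-sets given by `F · X Y`, on the subgroup `T`
of the ambient group `S`.  Morphisms are represented by functions `S → S`,
two functions agreeing on `X` representing the same morphism `X → Y`. -/
structure IsFusionSystem {S : Type*} [Group S] (T : Subgroup S) (F : HomPred S) : Prop where
  le_base : ∀ f X Y, F f X Y → X ≤ T ∧ Y ≤ T
  mapsTo : ∀ f X Y, F f X Y → Set.MapsTo f (X : Set S) (Y : Set S)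
  injOn : ∀ f X Y, F f X Y → Set.InjOn f (X : Set S)
  map_mul' : ∀ f X Y, F f X Y → ∀ x ∈ X, ∀ y ∈ X, f (x * y) = f x * f y
  of_eqOn : ∀ f g X Y, F f X Y → Set.EqOn g f (X : Set S) → F g X Y
  conj_mem : ∀ g ∈ T, ∀ X Y : Subgroup S, X ≤ T → Y ≤ T →
    (∀ x ∈ X, g⁻¹ * x * g ∈ Y) → F (fun x => g⁻¹ * x * g) X Y
  comp_mem : ∀ f g X Y Z, F f X Y → F g Y Z → F (g ∘ f) X Z
  restrict_mem : ∀ f X Y X₀ Y₀, F f X Y → X₀ ≤ X → Y₀ ≤ Y →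
    Set.MapsTo f (X₀ : Set S) (Y₀ : Set S) → F f X₀ Y₀
  corestrict_mem : ∀ f X Y, F f X Y → F f X (Subgroup.closure (f '' (X : Set S)))
  inv_mem : ∀ f X Y, F f X Y →
    ∃ g, F g (Subgroup.closure (f '' (X : Set S))) X ∧ ∀ x ∈ X, g (f x) = x

variable {S : Type*} [Group S]

/-- `f` is an `F`-isomorphism from `X` onto `Y`. -/
def IsFIso (F : HomPred S) (f : S → S) (X Y : Subgroup S) : Prop :=
  F f X Y ∧ f '' (X : Set S) = (Y : Set S)

/-- `X^F`, the set of `F`-conjugates of `X`. -/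
def FConj (F : HomPred S) (X : Subgroup S) : Set (Subgroup S) :=
  {Y | ∃ f, IsFIso F f X Y}

/-- `N` is normal in the fusion system `F` on the base subgroup `T`:
`N` is normal in `T` and every `F`-isomorphism `X → Y` extends to an
`F`-isomorphism `XN → YN` mapping `N` onto `N`. -/
def NormalInF (T : Subgroup S) (F : HomPred S) (N : Subgroup S) : Prop :=
  N ≤ T ∧ (∀ g ∈ T, ∀ n ∈ N, g⁻¹ * n * g ∈ N) ∧
    ∀ f X Y, IsFIso F f X Y →
      ∃ g, IsFIso F g (X ⊔ N) (Y ⊔ N) ∧ Set.EqOn g f (X : Set S) ∧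
        g '' (N : Set S) = (N : Set S)

/-- The supremum of the lengths of strictly increasing chains in `Ω`
terminating in `A`. -/
noncomputable def dimEnd (Ω : Set (Subgroup S)) (A : Subgroup S) : ℕ :=
  sSup {n | ∃ c : Fin (n + 1) → Subgroup S,
    StrictMono c ∧ (∀ i, c i ∈ Ω) ∧ c (Fin.last n) = A}

/-- The supremum of the lengths of strictly increasing chains in `Ω`. -/
noncomputable def dimOmega (Ω : Set (Subgroup S)) : ℕ :=
  sSup {n | ∃ c : Fin (n + 1) → Subgroup S, StrictMono c ∧ ∀ i, c i ∈ Ω}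

/-- `(Ω, star)` is a stratification on the fusion system `F` on base `T`. -/
structure IsStratification (T : Subgroup S) (F : HomPred S)
    (Ω : Set (Subgroup S)) (star : Subgroup S → Subgroup S) : Prop where
  omega_le : ∀ A ∈ Ω, A ≤ T
  star_mem : ∀ X : Subgroup S, X ≤ T → star X ∈ Ω
  star_fix : ∀ A ∈ Ω, star A = A
  star_mono : ∀ X Y : Subgroup S, X ≤ T → Y ≤ T → X ≤ Y → star X ≤ star Y
  finDim : ∃ N : ℕ, ∀ n : ℕ,
    (∃ c : Fin (n + 1) → Subgroup S, StrictMono c ∧ ∀ i, c i ∈ Ω) → n ≤ N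
  conj_invariant : ∀ A ∈ Ω, ∀ f Y, IsFIso F f A Y → Y ∈ Ω
  le_star : ∀ X : Subgroup S, X ≤ T → X ≤ star X
  extend_star : ∀ f X Y, IsFIso F f X Y →
    ∃ g, IsFIso F g (star X) (star Y) ∧ Set.EqOn g f (X : Set S)

/-- `dim_Ω(X)`, the supremum of the lengths of strictly increasing chains
in `Ω` terminating in `X⋆`. -/
noncomputable def dimStar (Ω : Set (Subgroup S)) (star : Subgroup S → Subgroup S)
    (X : Subgroup S) : ℕ :=
  dimEnd Ω (star X)

/-- `V` is fully normalized in the stratified fusion system `(F, Ω, star)` on base `T`. -/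
def FullyNormalizedIn (T : Subgroup S) (F : HomPred S) (Ω : Set (Subgroup S))
    (star : Subgroup S → Subgroup S) (V : Subgroup S) : Prop :=
  ∀ U ∈ FConj F V, dimStar Ω star (Subgroup.normalizer (U : Set S) ⊓ T) ≤ dimStar Ω star (Subgroup.normalizer (V : Set S) ⊓ T)

/-- `V` is fully centralized in the stratified fusion system `(F, Ω, star)` on base `T`. -/
def FullyCentralizedIn (T : Subgroup S) (F : HomPred S) (Ω : Set (Subgroup S))
    (star : Subgroup S → Subgroup S) (V : Subgroup S) : Prop :=
  ∀ U ∈ FConj F V,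
    dimStar Ω star ((Subgroup.centralizer (U : Set S) ⊓ T) ⊔ U) ≤
      dimStar Ω star ((Subgroup.centralizer (V : Set S) ⊓ T) ⊔ V)

/-- `Γ` is an `F`-closed set of subgroups. -/
def FClosed (F : HomPred S) (Γ : Set (Subgroup S)) : Prop :=
  Γ.Nonempty ∧ (∀ X ∈ Γ, ∀ Y ∈ FConj F X, Y ∈ Γ) ∧
    ∀ X ∈ Γ, ∀ Y : Subgroup S, X ≤ Y → Y ∈ Γ

/-- `Y` is normalizer-inductive in the fusion system `F` on base `T`. -/
def NormalizerInductive (T : Subgroup S) (F : HomPred S) (Y : Subgroup S) : Prop :=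
  ∀ X ∈ FConj F Y, ∃ φ, F φ (Subgroup.normalizer (X : Set S) ⊓ T) (Subgroup.normalizer (Y : Set S) ⊓ T) ∧
    φ '' (X : Set S) = (Y : Set S)

/-- `Y` is centralizer-inductive in the fusion system `F` on base `T`. -/
def CentralizerInductive (T : Subgroup S) (F : HomPred S) (Y : Subgroup S) : Prop :=
  ∀ X ∈ FConj F Y, ∃ ψ,
    F ψ ((Subgroup.centralizer (X : Set S) ⊓ T) ⊔ X)
        ((Subgroup.centralizer (Y : Set S) ⊓ T) ⊔ Y) ∧
    ψ '' (X : Set S) = (Y : Set S)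

/-- `F` is `Γ`-inductive. -/
def GammaInductive (T : Subgroup S) (F : HomPred S) (Γ : Set (Subgroup S)) : Prop :=
  ∀ X ∈ Γ, ∃ Y ∈ FConj F X, NormalizerInductive T F Y

/-- `F` is inductive (i.e. `Sub(T)`-inductive). -/
def InductiveFS (T : Subgroup S) (F : HomPred S) : Prop :=
  ∀ X : Subgroup S, X ≤ T → ∃ Y ∈ FConj F X, NormalizerInductive T F Y

/-- `⟨Φ⟩_T`: the smallest fusion system on `T` all of whose homomorphisms are
`Famb`-homomorphisms and whose hom-sets contain `Φ`. -/
def GenFS (T : Subgroup S) (Famb : HomPred S) (Φ : HomPred S) : HomPred S :=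
  fun f X Y => ∀ E : HomPred S, IsFusionSystem T E →
    (∀ g A B, E g A B → Famb g A B) → (∀ g A B, Φ g A B → E g A B) → E f X Y

/-- The generating set `Φ` for `N_F(V)`: `F`-isomorphisms between subgroups of
`N_S(V)` extending to `F`-isomorphisms `XV → YV` restricting to an automorphism of `V`. -/
def NPhi (F : HomPred S) (V : Subgroup S) : HomPred S :=
  fun f X Y => X ≤ Subgroup.normalizer (V : Set S) ∧ Y ≤ Subgroup.normalizer (V : Set S) ∧ IsFIso F f X Y ∧
    ∃ g, IsFIso F g (X ⊔ V) (Y ⊔ V) ∧ Set.EqOn g f (X : Set S) ∧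
      g '' (V : Set S) = (V : Set S)

/-- The fusion system `N_F(V)` on `N_S(V)`. -/
def NFus (F : HomPred S) (V : Subgroup S) : HomPred S :=
  GenFS (Subgroup.normalizer (V : Set S)) F (NPhi F V)

/-- The generating set `Ψ` for `C_F(V)`: `F`-isomorphisms between subgroups of
`C_S(V)` extending to `F`-isomorphisms `XV → YV` restricting to the identity on `V`. -/
def CPsi (F : HomPred S) (V : Subgroup S) : HomPred S :=
  fun f X Y => X ≤ Subgroup.centralizer (V : Set S) ∧
    Y ≤ Subgroup.centralizer (V : Set S) ∧ IsFIso F f X Y ∧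
    ∃ g, IsFIso F g (X ⊔ V) (Y ⊔ V) ∧ Set.EqOn g f (X : Set S) ∧ ∀ v ∈ V, g v = v

/-- The fusion system `C_F(V)` on `C_S(V)`. -/
def CFus (F : HomPred S) (V : Subgroup S) : HomPred S :=
  GenFS (Subgroup.centralizer (V : Set S)) F (CPsi F V)

/-- `X ↦ X• = (VX)⋆ ⊓ N_S(V)`. -/
def bulletStar (star : Subgroup S → Subgroup S) (V : Subgroup S) :
    Subgroup S → Subgroup S :=
  fun X => star (V ⊔ X) ⊓ Subgroup.normalizer (V : Set S)

/-- `N_Ω(V) = {X• : X ≤ N_S(V)}`. -/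
def bulletOmega (star : Subgroup S → Subgroup S) (V : Subgroup S) : Set (Subgroup S) :=
  {A | ∃ X : Subgroup S, X ≤ Subgroup.normalizer (V : Set S) ∧ A = bulletStar star V X}

/-- `A ↦ A° = (VA)⋆ ⊓ C_S(V)`. -/
def circStar (star : Subgroup S → Subgroup S) (V : Subgroup S) :
    Subgroup S → Subgroup S :=
  fun A => star (V ⊔ A) ⊓ Subgroup.centralizer (V : Set S)

/-- `C_Ω(V) = {A° : A ≤ C_S(V)}`. -/
def circOmega (star : Subgroup S → Subgroup S) (V : Subgroup S) : Set (Subgroup S) :=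
  {A | ∃ X : Subgroup S, X ≤ Subgroup.centralizer (V : Set S) ∧ A = circStar star V X}

/-- `T` is strongly closed in `F`. -/
def StronglyClosedF (F : HomPred S) (T : Subgroup S) : Prop :=
  ∀ X : Subgroup S, X ≤ T → ∀ Y ∈ FConj F X, Y ≤ T

namespace FSAux

variable {S : Type*} [Group S] {F : HomPred S} {Ω : Set (Subgroup S)}
  {star : Subgroup S → Subgroup S}

/-- `f` is multiplicative on the subgroup `A`. -/
def MulOn (f : S → S) (A : Subgroup S) : Prop :=
  ∀ x ∈ A, ∀ y ∈ A, f (x * y) = f x * f y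

lemma MulOn.mono {f : S → S} {A B : Subgroup S} (h : MulOn f B) (hAB : A ≤ B) : MulOn f A :=
  fun x hx y hy => h x (hAB hx) y (hAB hy)

lemma MulOn.map_one {f : S → S} {A : Subgroup S} (h : MulOn f A) : f 1 = 1 := by
  have h1 := h 1 A.one_mem 1 A.one_mem
  rw [one_mul] at h1
  have h2 : f 1 * 1 = f 1 * f 1 := by rw [mul_one]; exact h1
  exact (mul_left_cancel h2).symm

lemma MulOn.map_inv {f : S → S} {A : Subgroup S} (h : MulOn f A) {x : S} (hx : x ∈ A) :
    f x⁻¹ = (f x)⁻¹ := by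
  have h1 : f x⁻¹ * f x = 1 := by
    rw [← h x⁻¹ (A.inv_mem hx) x hx, inv_mul_cancel]; exact h.map_one
  exact eq_inv_of_mul_eq_one_left h1

lemma MulOn.conj {f : S → S} {A : Subgroup S} (h : MulOn f A) {x n : S} (hx : x ∈ A)
    (hn : n ∈ A) : f (n * x * n⁻¹) = f n * f x * (f n)⁻¹ := by
  rw [h (n * x) (A.mul_mem hn hx) n⁻¹ (A.inv_mem hn), h n hn x hx, h.map_inv hn]

lemma MulOn.conj' {f : S → S} {A : Subgroup S} (h : MulOn f A) {x n : S} (hx : x ∈ A)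
    (hn : n ∈ A) : f (n⁻¹ * x * n) = (f n)⁻¹ * f x * f n := by
  rw [h (n⁻¹ * x) (A.mul_mem (A.inv_mem hn) hx) n hn, h n⁻¹ (A.inv_mem hn) x hx, h.map_inv hn]

/-- The image of a subgroup under a function multiplicative on it. -/
def imgSub (f : S → S) (A : Subgroup S) (h : MulOn f A) : Subgroup S where
  carrier := f '' (A : Set S)
  one_mem' := ⟨1, A.one_mem, h.map_one⟩
  mul_mem' := by
    rintro _ _ ⟨x, hx, rfl⟩ ⟨y, hy, rfl⟩
    exact ⟨x * y, A.mul_mem hx hy, h x hx y hy⟩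
  inv_mem' := by
    rintro _ ⟨x, hx, rfl⟩
    exact ⟨x⁻¹, A.inv_mem hx, h.map_inv hx⟩

@[simp] lemma coe_imgSub {f : S → S} {A : Subgroup S} (h : MulOn f A) :
    (imgSub f A h : Set S) = f '' (A : Set S) := rfl

lemma mem_imgSub {f : S → S} {A : Subgroup S} {h : MulOn f A} {y : S} :
    y ∈ imgSub f A h ↔ ∃ x ∈ A, f x = y := Iff.rfl

lemma closure_image_eq {f : S → S} {A : Subgroup S} (h : MulOn f A) :
    Subgroup.closure (f '' (A : Set S)) = imgSub f A h := by
  rw [show f '' (A : Set S) = ((imgSub f A h : Subgroup S) : Set S) from rfl,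
    Subgroup.closure_eq]

lemma imgSub_mono {f : S → S} {A B : Subgroup S} {hA : MulOn f A} {hB : MulOn f B}
    (hAB : A ≤ B) : imgSub f A hA ≤ imgSub f B hB := by
  rintro _ ⟨x, hx, rfl⟩; exact ⟨x, hAB hx, rfl⟩

lemma imgSub_le {f : S → S} {A C : Subgroup S} {hA : MulOn f A}
    (h : Set.MapsTo f (A : Set S) (C : Set S)) : imgSub f A hA ≤ C := by
  rintro _ ⟨x, hx, rfl⟩; exact h hx

lemma imgSub_sup {f : S → S} {A B D : Subgroup S} (hm : MulOn f D) (hAD : A ≤ D) (hBD : B ≤ D) :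
    imgSub f (A ⊔ B) (hm.mono (sup_le hAD hBD)) =
      imgSub f A (hm.mono hAD) ⊔ imgSub f B (hm.mono hBD) := by
  apply le_antisymm
  · rintro _ ⟨x, hx, rfl⟩
    have key : ∀ z ∈ A ⊔ B, f z ∈ imgSub f A (hm.mono hAD) ⊔ imgSub f B (hm.mono hBD) := by
      intro z hz
      have hz' : z ∈ Subgroup.closure ((A : Set S) ∪ (B : Set S)) := by
        rwa [Subgroup.closure_union, Subgroup.closure_eq, Subgroup.closure_eq]
      refine (Subgroup.closure_induction (p := fun z _ => z ∈ A ⊔ B ∧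
        f z ∈ imgSub f A (hm.mono hAD) ⊔ imgSub f B (hm.mono hBD)) ?_ ?_ ?_ ?_ hz').2
      · rintro x (hx | hx)
        · exact ⟨le_sup_left (a := A) hx,
            le_sup_left (a := imgSub f A (hm.mono hAD)) ⟨x, hx, rfl⟩⟩
        · exact ⟨le_sup_right (b := B) hx,
            le_sup_right (b := imgSub f B (hm.mono hBD)) ⟨x, hx, rfl⟩⟩
      · exact ⟨(A ⊔ B).one_mem, by
          rw [hm.map_one]; exact Subgroup.one_mem _⟩
      · rintro x y _ _ ⟨hxm, hxi⟩ ⟨hym, hyi⟩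
        exact ⟨(A ⊔ B).mul_mem hxm hym, by
          rw [hm x ((sup_le hAD hBD) hxm) y ((sup_le hAD hBD) hym)]
          exact Subgroup.mul_mem _ hxi hyi⟩
      · rintro x _ ⟨hxm, hxi⟩
        exact ⟨(A ⊔ B).inv_mem hxm, by
          rw [hm.map_inv ((sup_le hAD hBD) hxm)]
          exact Subgroup.inv_mem _ hxi⟩
    exact key x hx
  · exact sup_le (imgSub_mono le_sup_left) (imgSub_mono le_sup_right)

end FSAux
namespace FSAux

variable {S : Type*} [Group S] {F : HomPred S} {Ω : Set (Subgroup S)}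
  {star : Subgroup S → Subgroup S}

section FS

variable (hF : IsFusionSystem ⊤ F)
include hF

lemma mulOn_of {f : S → S} {A B : Subgroup S} (hf : F f A B) : MulOn f A :=
  hF.map_mul' f A B hf

lemma F_enlarge {f : S → S} {A B C : Subgroup S} (hf : F f A B) (hBC : B ≤ C) : F f A C := by
  have hid : F (fun x => (1 : S)⁻¹ * x * 1) B C :=
    hF.conj_mem 1 (Subgroup.mem_top 1) B C le_top le_top
      (fun x hx => by simpa using hBC hx)
  have hc : F ((fun x => (1 : S)⁻¹ * x * 1) ∘ f) A C := hF.comp_mem f _ A B C hf hid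
  exact hF.of_eqOn _ f A C hc (fun x _ => by simp)

lemma F_id (A : Subgroup S) : F id A A := by
  have hc : F (fun x => (1 : S)⁻¹ * x * 1) A A :=
    hF.conj_mem 1 (Subgroup.mem_top 1) A A le_top le_top (fun x hx => by simpa using hx)
  exact hF.of_eqOn _ id A A hc (fun x _ => by simp)

lemma fconj_refl (A : Subgroup S) : A ∈ FConj F A :=
  ⟨id, F_id hF A, Set.image_id _⟩

lemma iso_to_image {f : S → S} {A B : Subgroup S} (hf : F f A B) :
    IsFIso F f A (imgSub f A (mulOn_of hF hf)) := by
  refine ⟨?_, rfl⟩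
  have h := hF.corestrict_mem f A B hf
  rwa [closure_image_eq (mulOn_of hF hf)] at h

lemma iso_restrict {f : S → S} {A B C : Subgroup S} (hf : F f A B) (hCA : C ≤ A) :
    IsFIso F f C (imgSub f C ((mulOn_of hF hf).mono hCA)) := by
  have h : F f C B := hF.restrict_mem f A B C B hf hCA le_rfl
    (fun x hx => hF.mapsTo f A B hf (hCA hx))
  exact iso_to_image hF h

lemma iso_inv {f : S → S} {A B : Subgroup S} (h : IsFIso F f A B) :
    ∃ g, IsFIso F g B A ∧ (∀ x ∈ A, g (f x) = x) ∧ (∀ y ∈ B, f (g y) = y) := by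
  obtain ⟨g, hg, hgf⟩ := hF.inv_mem f A B h.1
  have hcl : Subgroup.closure (f '' (A : Set S)) = B := by rw [h.2, Subgroup.closure_eq]
  rw [hcl] at hg
  have hfg : ∀ y ∈ B, f (g y) = y := by
    intro y hy
    have : y ∈ f '' (A : Set S) := by rw [h.2]; exact hy
    obtain ⟨x, hx, rfl⟩ := this
    rw [hgf x hx]
  refine ⟨g, ⟨hg, ?_⟩, hgf, hfg⟩
  apply subset_antisymm
  · exact (hF.mapsTo g B A hg).image_subset
  · intro x hx
    refine ⟨f x, ?_, hgf x hx⟩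
    rw [← h.2]; exact ⟨x, hx, rfl⟩

lemma iso_comp {f g : S → S} {A B C : Subgroup S} (hf : IsFIso F f A B)
    (hg : IsFIso F g B C) : IsFIso F (g ∘ f) A C := by
  refine ⟨hF.comp_mem f g A B C hf.1 hg.1, ?_⟩
  rw [Set.image_comp, hf.2, hg.2]

lemma fconj_symm {A B : Subgroup S} (h : B ∈ FConj F A) : A ∈ FConj F B := by
  obtain ⟨f, hf⟩ := h
  obtain ⟨g, hg, -, -⟩ := iso_inv hF hf
  exact ⟨g, hg⟩

lemma fconj_trans {A B C : Subgroup S} (hAB : B ∈ FConj F A) (hBC : C ∈ FConj F B) :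
    C ∈ FConj F A := by
  obtain ⟨f, hf⟩ := hAB
  obtain ⟨g, hg⟩ := hBC
  exact ⟨g ∘ f, iso_comp hF hf hg⟩

omit hF in
/-- Conjugation membership iff, in the convenient form. -/
lemma conj_mem_iff {A : Subgroup S} {n : S} (hn : n ∈ (Subgroup.normalizer ((A : Subgroup S) : Set S))) (x : S) :
    x ∈ A ↔ n⁻¹ * x * n ∈ A := by
  have h := Subgroup.mem_normalizer_iff.mp ((Subgroup.normalizer ((A : Subgroup S) : Set S)).inv_mem hn) x
  simpa using h

omit hF in
lemma conj_image_eq {V : Subgroup S} {g : S} (hg : g ∈ (Subgroup.normalizer ((V : Subgroup S) : Set S))) :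
    (fun x => g⁻¹ * x * g) '' (V : Set S) = (V : Set S) := by
  ext y
  constructor
  · rintro ⟨v, hv, rfl⟩
    exact (conj_mem_iff hg v).mp hv
  · intro hy
    refine ⟨g * y * g⁻¹, ?_, by group⟩
    exact (Subgroup.mem_normalizer_iff.mp hg y).mp hy

/-- Transport of normalizers along `F`-homomorphisms. -/
lemma imgSub_normalizer {f : S → S} {D E A : Subgroup S} {n : S} (hf : F f D E)
    (hAD : A ≤ D) (hn : n ∈ (Subgroup.normalizer ((A : Subgroup S) : Set S))) (hnD : n ∈ D) :
    f n ∈ (Subgroup.normalizer (((imgSub f A ((mulOn_of hF hf).mono hAD)) : Subgroup S) : Set S)) := by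
  have hm := mulOn_of hF hf
  rw [Subgroup.mem_normalizer_iff]
  intro h
  constructor
  · rintro ⟨a, ha, rfl⟩
    exact ⟨n * a * n⁻¹, (Subgroup.mem_normalizer_iff.mp hn a).mp ha,
      (hm.conj (hAD ha) hnD)⟩
  · rintro ⟨a, ha, heq⟩
    refine ⟨n⁻¹ * a * n, (conj_mem_iff hn a).mp ha, ?_⟩
    rw [hm.conj' (hAD ha) hnD, heq]
    group

end FS

end FSAux
namespace FSAux

variable {S : Type*} [Group S] {F : HomPred S} {Ω : Set (Subgroup S)}
  {star : Subgroup S → Subgroup S}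

section Dim

/-- The set of lengths of strictly increasing chains in `Ω'` ending at `A`. -/
def endSet (Ω' : Set (Subgroup S)) (A : Subgroup S) : Set ℕ :=
  {n | ∃ c : Fin (n + 1) → Subgroup S,
    StrictMono c ∧ (∀ i, c i ∈ Ω') ∧ c (Fin.last n) = A}

/-- The set of lengths of strictly increasing chains in `Ω'`. -/
def chainSet (Ω' : Set (Subgroup S)) : Set ℕ :=
  {n | ∃ c : Fin (n + 1) → Subgroup S, StrictMono c ∧ ∀ i, c i ∈ Ω'}

lemma dimEnd_eq_sSup (Ω' : Set (Subgroup S)) (A : Subgroup S) :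
    dimEnd Ω' A = sSup (endSet Ω' A) := rfl

lemma endSet_subset_chainSet {Ω' : Set (Subgroup S)} {A : Subgroup S} :
    endSet Ω' A ⊆ chainSet Ω' := by
  rintro n ⟨c, h1, h2, -⟩; exact ⟨c, h1, h2⟩

lemma zero_mem_endSet {Ω' : Set (Subgroup S)} {A : Subgroup S} (hA : A ∈ Ω') :
    0 ∈ endSet Ω' A := by
  refine ⟨fun _ => A, ?_, fun _ => hA, rfl⟩
  intro i j hij
  exact absurd rfl (by
    have h1 : (i : ℕ) < (j : ℕ) := hij
    have h2 : (j : ℕ) < 1 := j.isLt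
    omega : ¬ (0 = 0))

lemma le_dimEnd {Ω' : Set (Subgroup S)} {A : Subgroup S} {n : ℕ}
    (hB : BddAbove (chainSet Ω')) (hn : n ∈ endSet Ω' A) : n ≤ dimEnd Ω' A :=
  le_csSup (hB.mono endSet_subset_chainSet) hn

lemma dimEnd_mem_endSet {Ω' : Set (Subgroup S)} {A : Subgroup S}
    (hB : BddAbove (chainSet Ω')) (hA : A ∈ Ω') : dimEnd Ω' A ∈ endSet Ω' A :=
  Nat.sSup_mem ⟨0, zero_mem_endSet hA⟩ (hB.mono endSet_subset_chainSet)

lemma dimEnd_le {Ω' : Set (Subgroup S)} {A : Subgroup S} {m : ℕ} (hA : A ∈ Ω')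
    (h : ∀ n ∈ endSet Ω' A, n ≤ m) : dimEnd Ω' A ≤ m :=
  csSup_le ⟨0, zero_mem_endSet hA⟩ h

/-- Extending a chain by a strictly bigger top element. -/
lemma succ_mem_endSet {Ω' : Set (Subgroup S)} {A B : Subgroup S} {n : ℕ}
    (hn : n ∈ endSet Ω' A) (hB : B ∈ Ω') (hAB : A < B) : (n + 1) ∈ endSet Ω' B := by
  obtain ⟨c, hc, hcΩ, hlast⟩ := hn
  refine ⟨fun i => if h : (i : ℕ) < n + 1 then c ⟨i, h⟩ else B, ?_, ?_, ?_⟩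
  · intro i j hij
    have hij' : (i : ℕ) < (j : ℕ) := hij
    by_cases hj : (j : ℕ) < n + 1
    · have hi : (i : ℕ) < n + 1 := lt_trans hij' hj
      simp only [dif_pos hi, dif_pos hj]
      exact hc (show (⟨(i : ℕ), hi⟩ : Fin (n + 1)) < ⟨(j : ℕ), hj⟩ from hij')
    · have hi : (i : ℕ) < n + 1 := by
        have := j.isLt; omega
      simp only [dif_pos hi, dif_neg hj]
      calc c ⟨(i : ℕ), hi⟩ ≤ c (Fin.last n) := hc.monotone (Fin.le_last _)
        _ = A := hlast
        _ < B := hAB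
  · intro i
    by_cases h : (i : ℕ) < n + 1
    · simp only [dif_pos h]; exact hcΩ _
    · simp only [dif_neg h]; exact hB
  · have h : ¬ ((Fin.last (n + 1) : ℕ) < n + 1) := by simp
    simp only [dif_neg h]

lemma dimEnd_lt_of_lt {Ω' : Set (Subgroup S)} {A B : Subgroup S}
    (hB : BddAbove (chainSet Ω')) (hAΩ : A ∈ Ω') (hBΩ : B ∈ Ω') (hAB : A < B) :
    dimEnd Ω' A < dimEnd Ω' B := by
  have h1 : dimEnd Ω' A ∈ endSet Ω' A := dimEnd_mem_endSet hB hAΩ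
  have h2 : dimEnd Ω' A + 1 ∈ endSet Ω' B := succ_mem_endSet h1 hBΩ hAB
  have h3 := le_dimEnd hB h2
  omega

lemma dimEnd_le_of_le {Ω' : Set (Subgroup S)} {A B : Subgroup S}
    (hB : BddAbove (chainSet Ω')) (hAΩ : A ∈ Ω') (hBΩ : B ∈ Ω') (hAB : A ≤ B) :
    dimEnd Ω' A ≤ dimEnd Ω' B := by
  rcases eq_or_lt_of_le hAB with rfl | h
  · exact le_rfl
  · exact le_of_lt (dimEnd_lt_of_lt hB hAΩ hBΩ h)

lemma eq_of_le_of_dimEnd_le {Ω' : Set (Subgroup S)} {A B : Subgroup S}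
    (hB : BddAbove (chainSet Ω')) (hAΩ : A ∈ Ω') (hBΩ : B ∈ Ω') (hAB : A ≤ B)
    (hd : dimEnd Ω' B ≤ dimEnd Ω' A) : A = B := by
  rcases eq_or_lt_of_le hAB with rfl | h
  · rfl
  · exact absurd (dimEnd_lt_of_lt hB hAΩ hBΩ h) (by omega)

end Dim

section Strat

variable (hF : IsFusionSystem ⊤ F) (hΩ : IsStratification ⊤ F Ω star)
include hF hΩ

omit hF in
lemma bddAbove_chainSet : BddAbove (chainSet Ω) := by
  obtain ⟨N, hN⟩ := hΩ.finDim
  exact ⟨N, fun n hn => hN n hn⟩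

omit hF in
lemma star_mono' {A B : Subgroup S} (h : A ≤ B) : star A ≤ star B :=
  hΩ.star_mono A B le_top le_top h

omit hF in
lemma star_mem' (A : Subgroup S) : star A ∈ Ω := hΩ.star_mem A le_top

omit hF in
lemma le_star' (A : Subgroup S) : A ≤ star A := hΩ.le_star A le_top

omit hF in
lemma star_star' (A : Subgroup S) : star (star A) = star A :=
  hΩ.star_fix _ (star_mem' hΩ A)

/-- Transport of chain dimension along an `F`-isomorphism between members of `Ω`. -/
lemma dimEnd_le_of_iso {A B : Subgroup S} {f : S → S} (hAΩ : A ∈ Ω) (hBΩ : B ∈ Ω)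
    (h : IsFIso F f A B) : dimEnd Ω A ≤ dimEnd Ω B := by
  refine dimEnd_le hAΩ ?_
  rintro n ⟨c, hc, hcΩ, hlast⟩
  have hle : ∀ i, c i ≤ A := by
    intro i
    calc c i ≤ c (Fin.last n) := hc.monotone (Fin.le_last _)
      _ = A := hlast
  have hmul : MulOn f A := mulOn_of hF h.1
  refine le_dimEnd (bddAbove_chainSet hΩ)
    ⟨fun i => imgSub f (c i) (hmul.mono (hle i)), ?_, ?_, ?_⟩
  · intro i j hij
    have h1 : imgSub f (c i) (hmul.mono (hle i)) ≤ imgSub f (c j) (hmul.mono (hle j)) :=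
      imgSub_mono (le_of_lt (hc hij))
    refine lt_of_le_of_ne h1 ?_
    intro heq
    obtain ⟨x, hxj, hxi⟩ := SetLike.exists_of_lt (hc hij)
    have heq' : imgSub f (c i) (hmul.mono (hle i)) = imgSub f (c j) (hmul.mono (hle j)) := heq
    have hximg : f x ∈ imgSub f (c i) (hmul.mono (hle i)) := by
      rw [heq']; exact ⟨x, hxj, rfl⟩
    obtain ⟨y, hy, hyx⟩ := hximg
    have : y = x := hF.injOn f A B h.1 (hle i hy) (hle j hxj) hyx
    exact hxi (this ▸ hy)
  · intro i
    exact hΩ.conj_invariant (c i) (hcΩ i) f _ (iso_restrict hF h.1 (hle i))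
  · apply SetLike.ext'
    rw [coe_imgSub]
    rw [show c (Fin.last n) = A from hlast]
    exact h.2

lemma dimEnd_eq_of_iso {A B : Subgroup S} {f : S → S} (hAΩ : A ∈ Ω) (hBΩ : B ∈ Ω)
    (h : IsFIso F f A B) : dimEnd Ω A = dimEnd Ω B := by
  obtain ⟨g, hg, -, -⟩ := iso_inv hF h
  exact le_antisymm (dimEnd_le_of_iso hF hΩ hAΩ hBΩ h) (dimEnd_le_of_iso hF hΩ hBΩ hAΩ hg)

omit hF in
lemma dimStar_le_of_le {A B : Subgroup S} (h : A ≤ B) :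
    dimStar Ω star A ≤ dimStar Ω star B :=
  dimEnd_le_of_le (bddAbove_chainSet hΩ) (star_mem' hΩ A) (star_mem' hΩ B) (star_mono' hΩ h)

lemma dimStar_eq_of_iso {A B : Subgroup S} {f : S → S} (h : IsFIso F f A B) :
    dimStar Ω star A = dimStar Ω star B := by
  obtain ⟨g, hg, -⟩ := hΩ.extend_star f A B h
  exact dimEnd_eq_of_iso hF hΩ (star_mem' hΩ A) (star_mem' hΩ B) hg

omit hF in
lemma star_eq_of_le_of_dim_le {A B : Subgroup S} (h : star A ≤ star B)
    (hd : dimStar Ω star B ≤ dimStar Ω star A) : star A = star B :=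
  eq_of_le_of_dimEnd_le (bddAbove_chainSet hΩ) (star_mem' hΩ A) (star_mem' hΩ B) h hd

end Strat

end FSAux
namespace FSAux

variable {S : Type*} [Group S] {F : HomPred S} {Ω : Set (Subgroup S)}
  {star : Subgroup S → Subgroup S}

section Struct

variable (hF : IsFusionSystem ⊤ F) (hΩ : IsStratification ⊤ F Ω star)
include hF hΩ

/-- `N_S(A) ≤ N_S(A⋆)`. -/
lemma normalizer_le_normalizer_star (A : Subgroup S) :
    (Subgroup.normalizer ((A : Subgroup S) : Set S)) ≤ (Subgroup.normalizer (((star A) : Subgroup S) : Set S)) := by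
  intro n hn
  -- conjugation by `n` (as `x ↦ n⁻¹ x n`)
  have hm1 : MulOn (fun x => n⁻¹ * x * n) (star A) := by
    intro x _ y _; group
  have hF1 : F (fun x => n⁻¹ * x * n) (star A) (imgSub _ (star A) hm1) :=
    hF.conj_mem n (Subgroup.mem_top n) (star A) _ le_top le_top
      (fun x hx => ⟨x, hx, rfl⟩)
  have hIso1 : IsFIso F (fun x => n⁻¹ * x * n) (star A) (imgSub _ (star A) hm1) := ⟨hF1, rfl⟩
  have hK1 : imgSub _ (star A) hm1 ∈ Ω :=
    hΩ.conj_invariant (star A) (star_mem' hΩ A) _ _ hIso1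
  have hA1 : A ≤ imgSub (fun x => n⁻¹ * x * n) (star A) hm1 := by
    intro a ha
    refine ⟨n * a * n⁻¹, le_star' hΩ A ((Subgroup.mem_normalizer_iff.mp hn a).mp ha), by group⟩
  have hstar1 : star A ≤ imgSub (fun x => n⁻¹ * x * n) (star A) hm1 := by
    have := star_mono' hΩ hA1
    rwa [hΩ.star_fix _ hK1] at this
  -- conjugation by `n⁻¹`
  have hm2 : MulOn (fun x => (n⁻¹)⁻¹ * x * n⁻¹) (star A) := by
    intro x _ y _; group
  have hF2 : F (fun x => (n⁻¹)⁻¹ * x * n⁻¹) (star A) (imgSub _ (star A) hm2) :=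
    hF.conj_mem n⁻¹ (Subgroup.mem_top _) (star A) _ le_top le_top
      (fun x hx => ⟨x, hx, rfl⟩)
  have hIso2 : IsFIso F (fun x => (n⁻¹)⁻¹ * x * n⁻¹) (star A) (imgSub _ (star A) hm2) :=
    ⟨hF2, rfl⟩
  have hK2 : imgSub _ (star A) hm2 ∈ Ω :=
    hΩ.conj_invariant (star A) (star_mem' hΩ A) _ _ hIso2
  have hA2 : A ≤ imgSub (fun x => (n⁻¹)⁻¹ * x * n⁻¹) (star A) hm2 := by
    intro a ha
    refine ⟨n⁻¹ * a * n, le_star' hΩ A ((conj_mem_iff hn a).mp ha), by group⟩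
  have hstar2 : star A ≤ imgSub (fun x => (n⁻¹)⁻¹ * x * n⁻¹) (star A) hm2 := by
    have := star_mono' hΩ hA2
    rwa [hΩ.star_fix _ hK2] at this
  rw [Subgroup.mem_normalizer_iff]
  intro h
  constructor
  · intro hh
    obtain ⟨k, hk, hke⟩ := hstar1 hh
    have : h = n⁻¹ * k * n := hke.symm
    have : n * h * n⁻¹ = k := by rw [this]; group
    rw [this]; exact hk
  · intro hh
    obtain ⟨k, hk, hke⟩ := hstar2 hh
    -- hke : n * k * n⁻¹ = n * h * n⁻¹  (since (n⁻¹)⁻¹ = n)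
    have hke' : n * k * n⁻¹ = n * h * n⁻¹ := by
      have : (n⁻¹)⁻¹ * k * n⁻¹ = n * h * n⁻¹ := hke
      rwa [inv_inv] at this
    have : k = h := by
      have h1 := mul_right_cancel hke'
      exact mul_left_cancel h1
    rwa [← this]

omit hΩ in
/-- For an `F`-iso `κ` with `κ '' V = V`, images commute with `⊓ N_S(V)`. -/
lemma image_inf_normalizer {κ : S → S} {P Q V C : Subgroup S} (hκ : IsFIso F κ P Q)
    (hVP : V ≤ P) (hCP : C ≤ P) (hV : κ '' (V : Set S) = (V : Set S)) :
    κ '' ((C ⊓ (Subgroup.normalizer ((V : Subgroup S) : Set S)) : Subgroup S) : Set S)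
      = (κ '' (C : Set S)) ∩ ((Subgroup.normalizer ((V : Subgroup S) : Set S)) : Set S) := by
  have hm : MulOn κ P := mulOn_of hF hκ.1
  have hinj := hF.injOn κ P Q hκ.1
  apply subset_antisymm
  · rintro _ ⟨c, hc, rfl⟩
    rw [Subgroup.coe_inf] at hc
    obtain ⟨hcC, hcN⟩ := hc
    refine ⟨⟨c, hcC, rfl⟩, ?_⟩
    rw [SetLike.mem_coe, Subgroup.mem_normalizer_iff]
    intro h
    constructor
    · intro hh
      have : h ∈ κ '' (V : Set S) := by rw [hV]; exact hh
      obtain ⟨v, hv, rfl⟩ := this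
      have h1 : c * v * c⁻¹ ∈ V := (Subgroup.mem_normalizer_iff.mp hcN v).mp hv
      have h2 : κ c * κ v * (κ c)⁻¹ = κ (c * v * c⁻¹) :=
        (hm.conj (hVP hv) (hCP hcC)).symm
      rw [h2]
      have : κ (c * v * c⁻¹) ∈ κ '' (V : Set S) := ⟨_, h1, rfl⟩
      rwa [hV] at this
    · intro hh
      have : κ c * h * (κ c)⁻¹ ∈ κ '' (V : Set S) := by rw [hV]; exact hh
      obtain ⟨v, hv, hve⟩ := this
      have : h = (κ c)⁻¹ * κ v * κ c := by rw [hve]; group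
      rw [this, ← hm.conj' (hVP hv) (hCP hcC)]
      have h1 : c⁻¹ * v * c ∈ V := (conj_mem_iff hcN v).mp hv
      have : κ (c⁻¹ * v * c) ∈ κ '' (V : Set S) := ⟨_, h1, rfl⟩
      rwa [hV] at this
  · rintro a ⟨⟨c, hc, rfl⟩, hN⟩
    rw [SetLike.mem_coe] at hN
    refine ⟨c, ?_, rfl⟩
    rw [Subgroup.coe_inf]
    refine ⟨hc, ?_⟩
    rw [SetLike.mem_coe, Subgroup.mem_normalizer_iff]
    intro v
    constructor
    · intro hv
      have h1 : κ (c * v * c⁻¹) = κ c * κ v * (κ c)⁻¹ := hm.conj (hVP hv) (hCP hc)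
      have h2 : κ v ∈ (V : Set S) := by
        rw [← hV]; exact ⟨v, hv, rfl⟩
      have h3 : κ c * κ v * (κ c)⁻¹ ∈ V :=
        (Subgroup.mem_normalizer_iff.mp hN (κ v)).mp h2
      have h4 : κ (c * v * c⁻¹) ∈ κ '' (V : Set S) := by rw [hV]; rw [h1]; exact h3
      obtain ⟨w, hw, hwe⟩ := h4
      have : w = c * v * c⁻¹ := hinj (hVP hw)
        (P.mul_mem (P.mul_mem (hCP hc) (hVP hv)) (P.inv_mem (hCP hc))) hwe
      rw [← this]; exact hw
    · intro hv
      -- `hv : c * v * c⁻¹ ∈ V`; write `w := c * v * c⁻¹`, so `v = c⁻¹ * w * c`.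
      set w := c * v * c⁻¹ with hw
      have hveq : v = c⁻¹ * w * c := by rw [hw]; group
      have h1 : κ (c⁻¹ * w * c) = (κ c)⁻¹ * κ w * κ c := hm.conj' (hVP hv) (hCP hc)
      have h2 : κ w ∈ (V : Set S) := by rw [← hV]; exact ⟨w, hv, rfl⟩
      have h3 : (κ c)⁻¹ * κ w * κ c ∈ V := (conj_mem_iff hN (κ w)).mp h2
      have h4 : κ (c⁻¹ * w * c) ∈ κ '' (V : Set S) := by rw [hV, h1]; exact h3
      obtain ⟨u, hu, hue⟩ := h4
      have : u = c⁻¹ * w * c := hinj (hVP hu)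
        (P.mul_mem (P.mul_mem (P.inv_mem (hCP hc)) (hVP hv)) (hCP hc)) hue
      rw [hveq, ← this]; exact hu

/-- Star commutes with images under `F`-isomorphisms between members of `Ω`. -/
lemma imgSub_star {κ : S → S} {P Q : Subgroup S} (hκ : IsFIso F κ P Q)
    (hP : P ∈ Ω) (hQ : Q ∈ Ω) {D : Subgroup S} (hDP : D ≤ P) :
    imgSub κ (star D) ((mulOn_of hF hκ.1).mono
        (by rw [← hΩ.star_fix P hP]; exact star_mono' hΩ hDP))
      = star (imgSub κ D ((mulOn_of hF hκ.1).mono hDP)) := by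
  have hm : MulOn κ P := mulOn_of hF hκ.1
  have hsDP : star D ≤ P := by rw [← hΩ.star_fix P hP]; exact star_mono' hΩ hDP
  set E := imgSub κ D (hm.mono hDP) with hE
  set K := imgSub κ (star D) (hm.mono hsDP) with hK
  have hKiso : IsFIso F κ (star D) K := iso_restrict hF hκ.1 hsDP
  have hKΩ : K ∈ Ω := hΩ.conj_invariant (star D) (star_mem' hΩ D) κ K hKiso
  have hEK : E ≤ K := imgSub_mono (le_star' hΩ D)
  have h1 : star E ≤ K := by
    have := star_mono' hΩ hEK
    rwa [hΩ.star_fix K hKΩ] at this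
  -- reverse inclusion via the inverse isomorphism
  obtain ⟨ι, hι, hικ, hκι⟩ := iso_inv hF hκ
  have hmι : MulOn ι Q := mulOn_of hF hι.1
  have hEQ : E ≤ Q := by
    rintro _ ⟨x, hx, rfl⟩
    exact hF.mapsTo κ P Q hκ.1 (hDP hx)
  have hsEQ : star E ≤ Q := by rw [← hΩ.star_fix Q hQ]; exact star_mono' hΩ hEQ
  set L := imgSub ι (star E) (hmι.mono hsEQ) with hL
  have hLiso : IsFIso F ι (star E) L := iso_restrict hF hι.1 hsEQ
  have hLΩ : L ∈ Ω := hΩ.conj_invariant (star E) (star_mem' hΩ E) ι L hLiso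
  have hDL : D ≤ L := by
    intro d hd
    refine ⟨κ d, le_star' hΩ E ⟨d, hd, rfl⟩, hικ d (hDP hd)⟩
  have hsDL : star D ≤ L := by
    have := star_mono' hΩ hDL
    rwa [hΩ.star_fix L hLΩ] at this
  have h2 : K ≤ star E := by
    rintro _ ⟨x, hx, rfl⟩
    obtain ⟨y, hy, hye⟩ := hsDL hx
    rw [← hye, hκι y (hsEQ hy)]
    exact hy
  exact le_antisymm h2 h1

end Struct

end FSAux
namespace FSAux

variable {S : Type*} [Group S] {F : HomPred S} {Ω : Set (Subgroup S)}
  {star : Subgroup S → Subgroup S}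

/-- The auxiliary fusion system used to analyse `N_F(V)`: morphisms of `F` between
subgroups of `N_S(V)` that extend to the join with `V`, mapping `V` onto `V`. -/
def EV (F : HomPred S) (V : Subgroup S) : HomPred S := fun f A B =>
  A ≤ (Subgroup.normalizer ((V : Subgroup S) : Set S)) ∧ B ≤ (Subgroup.normalizer ((V : Subgroup S) : Set S)) ∧ F f A B ∧
    ∃ G C, IsFIso F G (A ⊔ V) C ∧ Set.EqOn G f (A : Set S) ∧ G '' (V : Set S) = (V : Set S)

section EVFS

variable (hF : IsFusionSystem ⊤ F)
include hF

lemma eV_isFusion (V : Subgroup S) : IsFusionSystem (Subgroup.normalizer ((V : Subgroup S) : Set S)) (EV F V) := by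
  constructor
  · exact fun f X Y h => ⟨h.1, h.2.1⟩
  · exact fun f X Y h => hF.mapsTo f X Y h.2.2.1
  · exact fun f X Y h => hF.injOn f X Y h.2.2.1
  · exact fun f X Y h => hF.map_mul' f X Y h.2.2.1
  · -- of_eqOn
    rintro f g X Y ⟨hX, hY, hf, G, C, hGC, hEq, hGV⟩ heq
    exact ⟨hX, hY, hF.of_eqOn f g X Y hf heq, G, C, hGC,
      fun x hx => (hEq hx).trans (heq hx).symm, hGV⟩
  · -- conj_mem
    intro g hg X Y hX hY hconj
    refine ⟨hX, hY, hF.conj_mem g (Subgroup.mem_top g) X Y le_top le_top hconj, ?_⟩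
    have hm : MulOn (fun x => g⁻¹ * x * g) (X ⊔ V) := by intro x _ y _; group
    refine ⟨fun x => g⁻¹ * x * g, imgSub _ (X ⊔ V) hm,
      ⟨hF.conj_mem g (Subgroup.mem_top g) (X ⊔ V) _ le_top le_top
        (fun x hx => ⟨x, hx, rfl⟩), rfl⟩, fun x _ => rfl, conj_image_eq hg⟩
  · -- comp_mem
    rintro f f' X Y Z ⟨hX, hY, hf, G1, C1, hGC1, hEq1, hGV1⟩
      ⟨hY', hZ, hf', G2, C2, hGC2, hEq2, hGV2⟩
    refine ⟨hX, hZ, hF.comp_mem f f' X Y Z hf hf', ?_⟩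
    have hm1 : MulOn G1 (X ⊔ V) := mulOn_of hF hGC1.1
    have hC1 : imgSub G1 (X ⊔ V) hm1 = C1 := SetLike.ext' hGC1.2
    have h1 : imgSub G1 X (hm1.mono le_sup_left) ≤ Y := by
      have himg : G1 '' (X : Set S) = f '' (X : Set S) := Set.image_congr (fun x hx => hEq1 hx)
      refine imgSub_le ?_
      intro x hx
      rw [show ((Y : Subgroup S) : Set S) = Y from rfl]
      have : G1 x ∈ G1 '' (X : Set S) := ⟨x, hx, rfl⟩
      rw [himg] at this
      obtain ⟨y, hy, hye⟩ := this
      rw [← hye]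
      exact hF.mapsTo f X Y hf hy
    have h2 : imgSub G1 V (hm1.mono le_sup_right) = V := SetLike.ext' hGV1
    have hC1le : C1 ≤ Y ⊔ V := by
      rw [← hC1, imgSub_sup hm1 le_sup_left le_sup_right]
      exact sup_le (le_trans h1 le_sup_left) (le_of_eq_of_le h2 le_sup_right)
    have hG1' : F G1 (X ⊔ V) (Y ⊔ V) := F_enlarge hF hGC1.1 hC1le
    have hcomp : F (G2 ∘ G1) (X ⊔ V) C2 := hF.comp_mem G1 G2 (X ⊔ V) (Y ⊔ V) C2 hG1' hGC2.1
    refine ⟨G2 ∘ G1, imgSub (G2 ∘ G1) (X ⊔ V) (mulOn_of hF hcomp),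
      iso_to_image hF hcomp, ?_, ?_⟩
    · intro x hx
      have hfx : f x ∈ (Y : Set S) := hF.mapsTo f X Y hf hx
      calc (G2 ∘ G1) x = G2 (f x) := by rw [Function.comp_apply, hEq1 hx]
        _ = f' (f x) := hEq2 hfx
        _ = (f' ∘ f) x := rfl
    · calc (G2 ∘ G1) '' (V : Set S) = G2 '' (G1 '' (V : Set S)) := Set.image_comp G2 G1 _
        _ = G2 '' (V : Set S) := by rw [hGV1]
        _ = (V : Set S) := hGV2
  · -- restrict_mem
    rintro f X Y X₀ Y₀ ⟨hX, hY, hf, G, C, hGC, hEq, hGV⟩ hX₀ hY₀ hMaps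
    refine ⟨le_trans hX₀ hX, le_trans hY₀ hY,
      hF.restrict_mem f X Y X₀ Y₀ hf hX₀ hY₀ hMaps, ?_⟩
    have hres : F G (X₀ ⊔ V) C := hF.restrict_mem G (X ⊔ V) C (X₀ ⊔ V) C hGC.1
      (sup_le_sup_right hX₀ V) le_rfl
      (fun x hx => by
        rw [← hGC.2]
        exact ⟨x, sup_le_sup_right hX₀ V hx, rfl⟩)
    exact ⟨G, imgSub G (X₀ ⊔ V) (mulOn_of hF hres), iso_to_image hF hres,
      fun x hx => hEq (hX₀ hx), hGV⟩
  · -- corestrict_mem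
    rintro f X Y ⟨hX, hY, hf, G, C, hGC, hEq, hGV⟩
    refine ⟨hX, ?_, hF.corestrict_mem f X Y hf, G, C, hGC, hEq, hGV⟩
    refine le_trans ?_ hY
    rw [Subgroup.closure_le]
    exact (hF.mapsTo f X Y hf).image_subset
  · -- inv_mem
    rintro f X Y ⟨hX, hY, hf, G, C, hGC, hEq, hGV⟩
    obtain ⟨u, huF, hu⟩ := hF.inv_mem f X Y hf
    have hmulf : MulOn f X := mulOn_of hF hf
    have hcl : Subgroup.closure (f '' (X : Set S)) = imgSub f X hmulf := closure_image_eq hmulf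
    have hmG : MulOn G (X ⊔ V) := mulOn_of hF hGC.1
    have hCsub : imgSub G (X ⊔ V) hmG = C := SetLike.ext' hGC.2
    have h1 : imgSub G X (hmG.mono le_sup_left) = imgSub f X hmulf :=
      SetLike.ext' (Set.image_congr (fun x hx => hEq hx))
    have h2 : imgSub G V (hmG.mono le_sup_right) = V := SetLike.ext' hGV
    have hC_eq : C = imgSub f X hmulf ⊔ V := by
      rw [← hCsub, imgSub_sup hmG le_sup_left le_sup_right, h1, h2]
    obtain ⟨H, hHiso, hGH, hHG⟩ := iso_inv hF hGC
    refine ⟨u, ⟨?_, hX, huF, H, X ⊔ V, ?_, ?_, ?_⟩, hu⟩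
    · rw [hcl]
      refine le_trans ?_ hY
      exact imgSub_le (hF.mapsTo f X Y hf)
    · rw [hcl, ← hC_eq]
      exact hHiso
    · rw [hcl]
      rintro _ ⟨x, hx, rfl⟩
      have hxs : x ∈ X ⊔ V := le_sup_left (a := X) hx
      calc H (f x) = H (G x) := by rw [hEq hx]
        _ = x := hGH x hxs
        _ = u (f x) := (hu x hx).symm
    · -- H '' V = V
      apply subset_antisymm
      · rintro _ ⟨v, hv, rfl⟩
        have hvC : v ∈ (C : Set S) := by
          rw [← hGC.2]
          have : v ∈ G '' (V : Set S) := by rw [hGV]; exact hv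
          obtain ⟨w, hw, rfl⟩ := this
          exact ⟨w, le_sup_right (b := V) hw, rfl⟩
        -- v = G w for some w ∈ V, so H v = w ∈ V
        have : v ∈ G '' (V : Set S) := by rw [hGV]; exact hv
        obtain ⟨w, hw, rfl⟩ := this
        rw [hGH w (le_sup_right (b := V) hw)]
        exact hw
      · intro w hw
        refine ⟨G w, ?_, hGH w (le_sup_right (b := V) hw)⟩
        rw [show ((V : Subgroup S) : Set S) = G '' (V : Set S) from hGV.symm]
        exact ⟨w, hw, rfl⟩

omit hF in
lemma nphi_to_EV {V : Subgroup S} {f : S → S} {A B : Subgroup S} (h : NPhi F V f A B) :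
    EV F V f A B := by
  obtain ⟨h1, h2, h3, g, hg, he, hgv⟩ := h
  exact ⟨h1, h2, h3.1, g, B ⊔ V, hg, he, hgv⟩

omit hF in
lemma nphi_to_NFus {V : Subgroup S} {f : S → S} {A B : Subgroup S} (h : NPhi F V f A B) :
    NFus F V f A B := fun E _ _ hΦ => hΦ f A B h

lemma nfus_to_EV {V : Subgroup S} {f : S → S} {A B : Subgroup S} (h : NFus F V f A B) :
    EV F V f A B :=
  h (EV F V) (eV_isFusion hF V) (fun g A' B' hg => hg.2.2.1)
    (fun g A' B' hg => nphi_to_EV hg)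

end EVFS

end FSAux
namespace FSAux

variable {S : Type*} [Group S] {F : HomPred S} {Ω : Set (Subgroup S)}
  {star : Subgroup S → Subgroup S}

section NI

variable (hF : IsFusionSystem ⊤ F) (hΩ : IsStratification ⊤ F Ω star)
include hF hΩ

lemma dimStar_le_of_hom {f : S → S} {A B : Subgroup S} (hf : F f A B) :
    dimStar Ω star A ≤ dimStar Ω star B := by
  have h1 := dimStar_eq_of_iso hF hΩ (iso_to_image hF hf)
  rw [h1]
  exact dimStar_le_of_le hΩ (imgSub_le (hF.mapsTo f A B hf))

/-- A fully normalized subgroup whose class contains a normalizer-inductive member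
is itself normalizer-inductive. -/
lemma prop_NI {V Z : Subgroup S} (hfn : FullyNormalizedIn ⊤ F Ω star V)
    (hZc : Z ∈ FConj F V) (hZni : NormalizerInductive ⊤ F Z) :
    NormalizerInductive ⊤ F V := by
  have hVZ : V ∈ FConj F Z := fconj_symm hF hZc
  obtain ⟨ψV, hψVF, hψVim⟩ := hZni V hVZ
  simp only [inf_top_eq] at hψVF
  set M := imgSub ψV (Subgroup.normalizer ((V : Subgroup S) : Set S)) (mulOn_of hF hψVF) with hM
  have hisoM : IsFIso F ψV (Subgroup.normalizer ((V : Subgroup S) : Set S)) M := iso_to_image hF hψVF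
  have hMle : M ≤ (Subgroup.normalizer ((Z : Subgroup S) : Set S)) := imgSub_le (hF.mapsTo _ _ _ hψVF)
  have hdVM : dimStar Ω star (Subgroup.normalizer ((V : Subgroup S) : Set S)) = dimStar Ω star M := dimStar_eq_of_iso hF hΩ hisoM
  have hd1 : dimStar Ω star (Subgroup.normalizer ((Z : Subgroup S) : Set S)) ≤ dimStar Ω star (Subgroup.normalizer ((V : Subgroup S) : Set S)) := by
    have := hfn Z hZc
    simpa only [inf_top_eq] using this
  have hd2 : dimStar Ω star M ≤ dimStar Ω star (Subgroup.normalizer ((Z : Subgroup S) : Set S)) := dimStar_le_of_le hΩ hMle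
  have hstarMZ : star M = star (Subgroup.normalizer ((Z : Subgroup S) : Set S)) :=
    star_eq_of_le_of_dim_le hΩ (star_mono' hΩ hMle) (by omega)
  obtain ⟨G, hGiso, hGeq⟩ := hΩ.extend_star ψV (Subgroup.normalizer ((V : Subgroup S) : Set S)) M hisoM
  rw [hstarMZ] at hGiso
  obtain ⟨ι, hιiso, hGι, hιG⟩ := iso_inv hF hGiso
  -- the image of `V` under `G` is `Z`
  have hZV : (Z : Set S) = G '' (V : Set S) := by
    rw [← hψVim]
    exact (Set.image_congr (fun x hx => (hGeq (Subgroup.le_normalizer hx)).symm))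
  have hιZ : ι '' (Z : Set S) = (V : Set S) := by
    rw [hZV, ← Set.image_comp]
    apply subset_antisymm
    · rintro _ ⟨v, hv, rfl⟩
      have : (ι ∘ G) v = v :=
        hGι v (le_star' hΩ (Subgroup.normalizer ((V : Subgroup S) : Set S)) (Subgroup.le_normalizer hv))
      rw [this]; exact hv
    · intro v hv
      exact ⟨v, hv, hGι v (le_star' hΩ (Subgroup.normalizer ((V : Subgroup S) : Set S)) (Subgroup.le_normalizer hv))⟩
  intro U hU
  have hUZ : U ∈ FConj F Z := fconj_trans hF hVZ hU
  obtain ⟨ψU, hψUF, hψUim⟩ := hZni U hUZ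
  simp only [inf_top_eq] at hψUF
  have hψU' : F ψU (Subgroup.normalizer ((U : Subgroup S) : Set S)) (star (Subgroup.normalizer ((Z : Subgroup S) : Set S))) := F_enlarge hF hψUF (le_star' hΩ _)
  have hφ : F (ι ∘ ψU) (Subgroup.normalizer ((U : Subgroup S) : Set S)) (star (Subgroup.normalizer ((V : Subgroup S) : Set S))) :=
    hF.comp_mem _ _ _ _ _ hψU' hιiso.1
  have hφU : (ι ∘ ψU) '' (U : Set S) = (V : Set S) := by
    rw [Set.image_comp, hψUim, hιZ]
  have hmφ : MulOn (ι ∘ ψU) (Subgroup.normalizer ((U : Subgroup S) : Set S)) := mulOn_of hF hφ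
  have hMaps : Set.MapsTo (ι ∘ ψU) ((Subgroup.normalizer ((U : Subgroup S) : Set S)) : Set S) ((Subgroup.normalizer ((V : Subgroup S) : Set S)) : Set S) := by
    intro n hn
    rw [SetLike.mem_coe, Subgroup.mem_normalizer_iff]
    intro h
    constructor
    · intro hh
      have : h ∈ (ι ∘ ψU) '' (U : Set S) := by rw [hφU]; exact hh
      obtain ⟨u, hu, rfl⟩ := this
      have h1 : n * u * n⁻¹ ∈ U := (Subgroup.mem_normalizer_iff.mp hn u).mp hu
      rw [← hmφ.conj (Subgroup.le_normalizer hu) hn]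
      have : (ι ∘ ψU) (n * u * n⁻¹) ∈ (ι ∘ ψU) '' (U : Set S) := ⟨_, h1, rfl⟩
      rwa [hφU] at this
    · intro hh
      have : (ι ∘ ψU) n * h * ((ι ∘ ψU) n)⁻¹ ∈ (ι ∘ ψU) '' (U : Set S) := by
        rw [hφU]; exact hh
      obtain ⟨u, hu, hue⟩ := this
      have h1 : h = (ι ∘ ψU) (n⁻¹ * u * n) := by
        rw [hmφ.conj' (Subgroup.le_normalizer hu) hn, hue]
        group
      have h2 : n⁻¹ * u * n ∈ U := (conj_mem_iff hn u).mp hu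
      rw [h1]
      have : (ι ∘ ψU) (n⁻¹ * u * n) ∈ (ι ∘ ψU) '' (U : Set S) := ⟨_, h2, rfl⟩
      rwa [hφU] at this
  have hφ' : F (ι ∘ ψU) (Subgroup.normalizer ((U : Subgroup S) : Set S)) (Subgroup.normalizer ((V : Subgroup S) : Set S)) :=
    hF.restrict_mem _ _ _ _ _ hφ le_rfl (le_star' hΩ _) hMaps
  refine ⟨ι ∘ ψU, ?_, hφU⟩
  simpa only [inf_top_eq] using hφ'

end NI

end FSAux
namespace FSAux

variable {S : Type*} [Group S] {F : HomPred S} {Ω : Set (Subgroup S)}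
  {star : Subgroup S → Subgroup S}

section Bullet

variable (hΩ : IsStratification ⊤ F Ω star)
include hΩ

lemma star_sup_eq {V A : Subgroup S} (h : V ≤ star A) : star (V ⊔ A) = star A := by
  apply le_antisymm
  · calc star (V ⊔ A) ≤ star (star A) := star_mono' hΩ (sup_le h (le_star' hΩ A))
      _ = star A := star_star' hΩ A
  · exact star_mono' hΩ le_sup_right

lemma bullet_spec {V B : Subgroup S} (hB : B ∈ bulletOmega star V) :
    star (V ⊔ B) ⊓ (Subgroup.normalizer ((V : Subgroup S) : Set S)) = B ∧ V ≤ B := by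
  obtain ⟨X₀, hX₀R, rfl⟩ := hB
  have hVB : V ≤ bulletStar star V X₀ := by
    refine le_inf ?_ Subgroup.le_normalizer
    exact le_trans le_sup_left (le_star' hΩ (V ⊔ X₀))
  have hX₀B : X₀ ≤ bulletStar star V X₀ := by
    refine le_inf ?_ hX₀R
    exact le_trans le_sup_right (le_star' hΩ (V ⊔ X₀))
  have hstar : star (V ⊔ bulletStar star V X₀) = star (V ⊔ X₀) := by
    apply le_antisymm
    · have h1 : V ⊔ bulletStar star V X₀ ≤ star (V ⊔ X₀) := by
        refine sup_le (le_trans le_sup_left (le_star' hΩ (V ⊔ X₀))) ?_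
        exact inf_le_left
      calc star (V ⊔ bulletStar star V X₀) ≤ star (star (V ⊔ X₀)) := star_mono' hΩ h1
        _ = star (V ⊔ X₀) := star_star' hΩ _
    · exact star_mono' hΩ (sup_le_sup_left hX₀B V)
  constructor
  · rw [hstar]; rfl
  · exact hVB

lemma beta_lt {V B₁ B₂ : Subgroup S} (h₁ : B₁ ∈ bulletOmega star V)
    (h₂ : B₂ ∈ bulletOmega star V) (h : B₁ < B₂) :
    star (V ⊔ B₁) < star (V ⊔ B₂) := by
  refine lt_of_le_of_ne (star_mono' hΩ (sup_le_sup_left h.le V)) ?_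
  intro he
  have e1 := (bullet_spec hΩ h₁).1
  have e2 := (bullet_spec hΩ h₂).1
  rw [he, e2] at e1
  exact absurd e1.symm h.ne

lemma bddAbove_chainSet_bullet (V : Subgroup S) :
    BddAbove (chainSet (bulletOmega star V)) := by
  obtain ⟨N, hN⟩ := hΩ.finDim
  refine ⟨N, ?_⟩
  rintro n ⟨c, hc, hcΩ⟩
  refine hN n ⟨fun i => star (V ⊔ c i), ?_, fun i => star_mem' hΩ _⟩
  intro i j hij
  exact beta_lt hΩ (hcΩ i) (hcΩ j) (hc hij)

lemma bullet_star_sup {V X₀ : Subgroup S} (hX₀R : X₀ ≤ (Subgroup.normalizer ((V : Subgroup S) : Set S))) :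
    star (V ⊔ bulletStar star V X₀) = star (V ⊔ X₀) := by
  have hX₀B : X₀ ≤ bulletStar star V X₀ := by
    refine le_inf ?_ hX₀R
    exact le_trans le_sup_right (le_star' hΩ (V ⊔ X₀))
  apply le_antisymm
  · have h1 : V ⊔ bulletStar star V X₀ ≤ star (V ⊔ X₀) := by
      refine sup_le (le_trans le_sup_left (le_star' hΩ (V ⊔ X₀))) ?_
      exact inf_le_left
    calc star (V ⊔ bulletStar star V X₀) ≤ star (star (V ⊔ X₀)) := star_mono' hΩ h1
      _ = star (V ⊔ X₀) := star_star' hΩ _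
  · exact star_mono' hΩ (sup_le_sup_left hX₀B V)

end Bullet

end FSAux

open FSAux

/-- Lemma 2.11. If `X ∈ Γ` and `X⋆` is fully normalized in `F`, then
there is an `N_F(X⋆)`-conjugate `X′` of `X` which is fully normalized in `F`; moreover,
for any such `X′` one has `X⋆ = (X′)⋆`, and `X′` is fully normalized in `N_F(X⋆)`. -/
theorem exists_fullyNormalized_NF_conjugate
    {S : Type*} [Group S] (F : HomPred S)
    (Ω : Set (Subgroup S)) (star : Subgroup S → Subgroup S)
    (hF : IsFusionSystem ⊤ F) (hΩ : IsStratification ⊤ F Ω star)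
    (Γ : Set (Subgroup S)) (hΓ : FClosed F Γ) (hind : GammaInductive ⊤ F Γ)
    (X : Subgroup S) (hX : X ∈ Γ)
    (hfn : FullyNormalizedIn ⊤ F Ω star (star X)) :
    (∃ X' ∈ FConj (NFus F (star X)) X, FullyNormalizedIn ⊤ F Ω star X') ∧
    ∀ X' ∈ FConj (NFus F (star X)) X, FullyNormalizedIn ⊤ F Ω star X' →
      star X = star X' ∧
      FullyNormalizedIn (Subgroup.normalizer ((star X : Subgroup S) : Set S)) (NFus F (star X))
        (bulletOmega star (star X)) (bulletStar star (star X)) X' := by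
  classical
  obtain ⟨-, hΓconj, hΓup⟩ := hΓ
  set V := star X with hVdef
  have hVΩ : V ∈ Ω := star_mem' hΩ X
  have hVfix : star V = V := hΩ.star_fix V hVΩ
  have hXV : X ≤ V := le_star' hΩ X
  have hVR : V ≤ (Subgroup.normalizer ((V : Subgroup S) : Set S)) := Subgroup.le_normalizer
  have hVΓ : V ∈ Γ := hΓup X hX V hXV
  obtain ⟨Z, hZc, hZni⟩ := hind V hVΓ
  have hVni : NormalizerInductive ⊤ F V := prop_NI hF hΩ hfn hZc hZni
  obtain ⟨Y, hYc, hYni⟩ := hind X hX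
  obtain ⟨θ, hθ⟩ := hYc
  obtain ⟨g, hgiso, hgeq⟩ := hΩ.extend_star θ X Y hθ
  rw [← hVdef] at hgiso
  have hWc : star Y ∈ FConj F V := ⟨g, hgiso⟩
  obtain ⟨γ, hγF, hγim⟩ := hVni (star Y) hWc
  simp only [inf_top_eq] at hγF
  have hYW : Y ≤ star Y := le_star' hΩ Y
  have hYNW : Y ≤ (Subgroup.normalizer (((star Y) : Subgroup S) : Set S)) := le_trans hYW Subgroup.le_normalizer
  have hmγ : MulOn γ (Subgroup.normalizer (((star Y) : Subgroup S) : Set S)) := mulOn_of hF hγF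
  set X' := imgSub γ Y (hmγ.mono hYNW) with hX'def
  have hX'V : X' ≤ V := by
    rintro _ ⟨y, hy, rfl⟩
    have h1 : γ y ∈ γ '' ((star Y : Subgroup S) : Set S) := ⟨y, hYW hy, rfl⟩
    rw [hγim] at h1
    exact h1
  have hgX : g '' (X : Set S) = (Y : Set S) := by
    rw [Set.image_congr (fun x hx => hgeq hx)]
    exact hθ.2
  have hgXF : F g X (star Y) := hF.restrict_mem g V (star Y) X (star Y) hgiso.1 hXV le_rfl
    (fun x hx => hF.mapsTo g V (star Y) hgiso.1 (hXV hx))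
  have hgXF' : F g X (Subgroup.normalizer (((star Y) : Subgroup S) : Set S)) := F_enlarge hF hgXF Subgroup.le_normalizer
  have hαF : F (γ ∘ g) X (Subgroup.normalizer ((V : Subgroup S) : Set S)) := hF.comp_mem _ _ _ _ _ hgXF' hγF
  have hαX : (γ ∘ g) '' (X : Set S) = (X' : Set S) := by
    rw [Set.image_comp, hgX]
    rfl
  have hαXF : F (γ ∘ g) X X' := hF.restrict_mem _ _ _ X X' hαF le_rfl
    (le_trans hX'V hVR) (fun x hx => by rw [← hαX]; exact ⟨x, hx, rfl⟩)
  have hisoXX' : IsFIso F (γ ∘ g) X X' := ⟨hαXF, hαX⟩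
  have hgV : F g V (Subgroup.normalizer (((star Y) : Subgroup S) : Set S)) := F_enlarge hF hgiso.1 Subgroup.le_normalizer
  have hαVF : F (γ ∘ g) V (Subgroup.normalizer ((V : Subgroup S) : Set S)) := hF.comp_mem _ _ _ _ _ hgV hγF
  have hαV : (γ ∘ g) '' (V : Set S) = (V : Set S) := by
    rw [Set.image_comp, hgiso.2, hγim]
  have hαVF' : F (γ ∘ g) V V := hF.restrict_mem _ _ _ V V hαVF le_rfl hVR
    (fun x hx => by rw [← hαV]; exact ⟨x, hx, rfl⟩)
  have hisoVV : IsFIso F (γ ∘ g) V V := ⟨hαVF', hαV⟩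
  have hNPhi : NPhi F V (γ ∘ g) X X' := by
    refine ⟨le_trans hXV hVR, le_trans hX'V hVR, hisoXX', γ ∘ g, ?_, fun x _ => rfl, hαV⟩
    rw [sup_eq_right.mpr hXV, sup_eq_right.mpr hX'V]
    exact hisoVV
  have hX'NF : X' ∈ FConj (NFus F V) X := ⟨γ ∘ g, nphi_to_NFus hNPhi, hαX⟩
  have hX'fn : FullyNormalizedIn ⊤ F Ω star X' := by
    intro U hU
    simp only [inf_top_eq]
    have hγYF : F γ Y (Subgroup.normalizer ((V : Subgroup S) : Set S)) := hF.restrict_mem γ (Subgroup.normalizer (((star Y) : Subgroup S) : Set S)) (Subgroup.normalizer ((V : Subgroup S) : Set S)) Y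
      (Subgroup.normalizer ((V : Subgroup S) : Set S)) hγF hYNW le_rfl (fun y hy => hF.mapsTo _ _ _ hγF (hYNW hy))
    have hX'Y : X' ∈ FConj F Y := ⟨γ, iso_to_image hF hγYF⟩
    have hUY : U ∈ FConj F Y := fconj_trans hF hX'Y hU
    obtain ⟨φU, hφUF, hφUim⟩ := hYni U hUY
    simp only [inf_top_eq] at hφUF
    have h3 : dimStar Ω star (Subgroup.normalizer ((U : Subgroup S) : Set S)) ≤ dimStar Ω star (Subgroup.normalizer ((Y : Subgroup S) : Set S)) :=
      dimStar_le_of_hom hF hΩ hφUF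
    have hNY : (Subgroup.normalizer ((Y : Subgroup S) : Set S)) ≤ (Subgroup.normalizer (((star Y) : Subgroup S) : Set S)) := normalizer_le_normalizer_star hF hΩ Y
    have h4 : F γ (Subgroup.normalizer ((Y : Subgroup S) : Set S)) (Subgroup.normalizer ((V : Subgroup S) : Set S)) := hF.restrict_mem γ (Subgroup.normalizer (((star Y) : Subgroup S) : Set S))
      (Subgroup.normalizer ((V : Subgroup S) : Set S)) (Subgroup.normalizer ((Y : Subgroup S) : Set S)) (Subgroup.normalizer ((V : Subgroup S) : Set S)) hγF hNY le_rfl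
      (fun x hx => hF.mapsTo _ _ _ hγF (hNY hx))
    have h5 : Set.MapsTo γ ((Subgroup.normalizer ((Y : Subgroup S) : Set S)) : Set S) ((Subgroup.normalizer ((X' : Subgroup S) : Set S)) : Set S) := by
      intro n hn
      exact imgSub_normalizer hF hγF hYNW hn (hNY hn)
    have h7 : dimStar Ω star (Subgroup.normalizer ((Y : Subgroup S) : Set S)) ≤ dimStar Ω star (Subgroup.normalizer ((X' : Subgroup S) : Set S)) := by
      rw [dimStar_eq_of_iso hF hΩ (iso_to_image hF h4)]
      exact dimStar_le_of_le hΩ (imgSub_le h5)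
    exact le_trans h3 h7
  refine ⟨⟨X', hX'NF, hX'fn⟩, ?_⟩
  -- Part 2
  intro X'' hX''NF hX''fn
  obtain ⟨f, hfN, hfim⟩ := hX''NF
  obtain ⟨hXR, hX''R, hfF, G2, C2, hGC2, hEq2, hG2V⟩ := nfus_to_EV hF hfN
  rw [sup_eq_right.mpr hXV] at hGC2
  have hX''V : X'' ≤ V := by
    intro x hx
    have h1 : x ∈ f '' (X : Set S) := by rw [hfim]; exact hx
    obtain ⟨y, hy, rfl⟩ := h1
    have h2 : f y = G2 y := (hEq2 hy).symm
    rw [h2]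
    have h3 : G2 y ∈ G2 '' ((V : Subgroup S) : Set S) := ⟨y, hXV hy, rfl⟩
    rw [hG2V] at h3
    exact h3
  have hisoXX'' : IsFIso F f X X'' := ⟨hfF, hfim⟩
  have hstar2 : star X'' = V := by
    have h1 : star X'' ≤ star X := by
      rw [← hVdef, ← hVfix]
      exact star_mono' hΩ hX''V
    have h2 := star_eq_of_le_of_dim_le hΩ h1
      (le_of_eq (dimStar_eq_of_iso hF hΩ hisoXX''))
    rw [← hVdef] at h2
    exact h2
  refine ⟨hstar2.symm, ?_⟩
  intro U hU
  obtain ⟨fU, hfUN, hfUim⟩ := hU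
  obtain ⟨hX''R2, hUR, hfUF, G3, C3, hGC3, hEq3, hG3V⟩ := nfus_to_EV hF hfUN
  rw [sup_eq_right.mpr hX''V] at hGC3
  have hUV : U ≤ V := by
    intro x hx
    have h1 : x ∈ fU '' (X'' : Set S) := by rw [hfUim]; exact hx
    obtain ⟨y, hy, rfl⟩ := h1
    have h2 : fU y = G3 y := (hEq3 hy).symm
    rw [h2]
    have h3 : G3 y ∈ G3 '' ((V : Subgroup S) : Set S) := ⟨y, hX''V hy, rfl⟩
    rw [hG3V] at h3
    exact h3
  have hisoX''U : IsFIso F fU X'' U := ⟨hfUF, hfUim⟩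
  have hstarU : star U = V := by
    have h1 : star U ≤ star X'' := by
      rw [hstar2, ← hVfix]
      exact star_mono' hΩ hUV
    exact (star_eq_of_le_of_dim_le hΩ h1
      (le_of_eq (dimStar_eq_of_iso hF hΩ hisoX''U))).trans hstar2
  have hNU : (Subgroup.normalizer ((U : Subgroup S) : Set S)) ≤ (Subgroup.normalizer ((V : Subgroup S) : Set S)) := by
    have h := normalizer_le_normalizer_star hF hΩ U
    rwa [hstarU] at h
  have hNX'' : (Subgroup.normalizer ((X'' : Subgroup S) : Set S)) ≤ (Subgroup.normalizer ((V : Subgroup S) : Set S)) := by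
    have h := normalizer_le_normalizer_star hF hΩ X''
    rwa [hstar2] at h
  rw [inf_eq_left.mpr hNU, inf_eq_left.mpr hNX'']
  have hVle1 : V ≤ star (Subgroup.normalizer ((U : Subgroup S) : Set S)) := by
    rw [← hstarU]
    exact star_mono' hΩ Subgroup.le_normalizer
  have hVle2 : V ≤ star (Subgroup.normalizer ((X'' : Subgroup S) : Set S)) := by
    rw [← hstar2]
    exact star_mono' hΩ Subgroup.le_normalizer
  have hs1 : star (V ⊔ (Subgroup.normalizer ((U : Subgroup S) : Set S))) = star (Subgroup.normalizer ((U : Subgroup S) : Set S)) := star_sup_eq hΩ hVle1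
  have hs2 : star (V ⊔ (Subgroup.normalizer ((X'' : Subgroup S) : Set S))) = star (Subgroup.normalizer ((X'' : Subgroup S) : Set S)) := star_sup_eq hΩ hVle2
  show dimEnd (bulletOmega star V) (star (V ⊔ (Subgroup.normalizer ((U : Subgroup S) : Set S))) ⊓ (Subgroup.normalizer ((V : Subgroup S) : Set S)))
    ≤ dimEnd (bulletOmega star V) (star (V ⊔ (Subgroup.normalizer ((X'' : Subgroup S) : Set S))) ⊓ (Subgroup.normalizer ((V : Subgroup S) : Set S)))
  rw [hs1, hs2]
  -- the global normalizer map `χ : N_S(U) → N_S(X'')`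
  have hX''Γ : X'' ∈ Γ := hΓconj X hX X'' ⟨f, hisoXX''⟩
  obtain ⟨Z2, hZ2c, hZ2ni⟩ := hind X'' hX''Γ
  have hX''ni : NormalizerInductive ⊤ F X'' := prop_NI hF hΩ hX''fn hZ2c hZ2ni
  obtain ⟨χ, hχF, hχim⟩ := hX''ni U ⟨fU, hisoX''U⟩
  simp only [inf_top_eq] at hχF
  set NN := imgSub χ (Subgroup.normalizer ((U : Subgroup S) : Set S)) (mulOn_of hF hχF) with hNNdef
  have hisoNN : IsFIso F χ (Subgroup.normalizer ((U : Subgroup S) : Set S)) NN := iso_to_image hF hχF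
  have hNNle : NN ≤ (Subgroup.normalizer ((X'' : Subgroup S) : Set S)) := imgSub_le (hF.mapsTo _ _ _ hχF)
  obtain ⟨Θ, hΘiso, hΘeq⟩ := hΩ.extend_star χ (Subgroup.normalizer ((U : Subgroup S) : Set S)) NN hisoNN
  have hP : star (Subgroup.normalizer ((U : Subgroup S) : Set S)) ∈ Ω := star_mem' hΩ _
  have hQ : star NN ∈ Ω := star_mem' hΩ _
  have hmΘ : MulOn Θ (star (Subgroup.normalizer ((U : Subgroup S) : Set S))) := mulOn_of hF hΘiso.1
  have hU_le_P : U ≤ star (Subgroup.normalizer ((U : Subgroup S) : Set S)) :=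
    le_trans Subgroup.le_normalizer (le_star' hΩ _)
  have himgUset : Θ '' (U : Set S) = (X'' : Set S) := by
    rw [Set.image_congr (fun x hx => hΘeq (Subgroup.le_normalizer hx))]
    exact hχim
  have hΘVset : Θ '' (V : Set S) = (V : Set S) := by
    have h1 := imgSub_star hF hΩ hΘiso hP hQ (D := U) hU_le_P
    have h2 : imgSub Θ U ((mulOn_of hF hΘiso.1).mono hU_le_P) = X'' :=
      SetLike.ext' himgUset
    rw [h2] at h1
    have h3 : Θ '' ((star U : Subgroup S) : Set S) = ((star X'' : Subgroup S) : Set S) :=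
      congrArg (fun (K : Subgroup S) => (K : Set S)) h1
    rw [hstarU, hstar2] at h3
    exact h3
  have hbddN := bddAbove_chainSet_bullet hΩ (F := F) V
  have hT2 : star (Subgroup.normalizer ((X'' : Subgroup S) : Set S)) ⊓ (Subgroup.normalizer ((V : Subgroup S) : Set S)) ∈ bulletOmega star V := by
    refine ⟨(Subgroup.normalizer ((X'' : Subgroup S) : Set S)), hNX'', ?_⟩
    show star (Subgroup.normalizer ((X'' : Subgroup S) : Set S)) ⊓ (Subgroup.normalizer ((V : Subgroup S) : Set S)) = star (V ⊔ (Subgroup.normalizer ((X'' : Subgroup S) : Set S))) ⊓ (Subgroup.normalizer ((V : Subgroup S) : Set S))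
    rw [hs2]
  have hmemLHS : star (Subgroup.normalizer ((U : Subgroup S) : Set S)) ⊓ (Subgroup.normalizer ((V : Subgroup S) : Set S)) ∈ bulletOmega star V := by
    refine ⟨(Subgroup.normalizer ((U : Subgroup S) : Set S)), hNU, ?_⟩
    show star (Subgroup.normalizer ((U : Subgroup S) : Set S)) ⊓ (Subgroup.normalizer ((V : Subgroup S) : Set S)) = star (V ⊔ (Subgroup.normalizer ((U : Subgroup S) : Set S))) ⊓ (Subgroup.normalizer ((V : Subgroup S) : Set S))
    rw [hs1]
  refine dimEnd_le hmemLHS ?_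
  rintro n ⟨c, hc, hcΩ, hlast⟩
  have hcle : ∀ i, c i ≤ star (Subgroup.normalizer ((U : Subgroup S) : Set S)) ⊓ (Subgroup.normalizer ((V : Subgroup S) : Set S)) := by
    intro i
    rw [← hlast]
    exact hc.monotone (Fin.le_last i)
  have hciP : ∀ i, c i ≤ star (Subgroup.normalizer ((U : Subgroup S) : Set S)) := fun i => le_trans (hcle i) inf_le_left
  have hVci : ∀ i, V ⊔ c i ≤ star (Subgroup.normalizer ((U : Subgroup S) : Set S)) := fun i => sup_le hVle1 (hciP i)
  have hCP : ∀ i, star (V ⊔ c i) ≤ star (Subgroup.normalizer ((U : Subgroup S) : Set S)) := by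
    intro i
    calc star (V ⊔ c i) ≤ star (star (Subgroup.normalizer ((U : Subgroup S) : Set S))) := star_mono' hΩ (hVci i)
      _ = star (Subgroup.normalizer ((U : Subgroup S) : Set S)) := star_star' hΩ _
  set m : Fin (n + 1) → Subgroup S :=
    fun i => imgSub Θ (star (V ⊔ c i)) (hmΘ.mono (hCP i)) ⊓ (Subgroup.normalizer ((V : Subgroup S) : Set S)) with hmdef
  -- the image of `c i` is `m i`
  have hci_img : ∀ i, imgSub Θ (c i) (hmΘ.mono (hciP i)) = m i := by
    intro i
    have hspec := (bullet_spec hΩ (hcΩ i)).1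
    have hinf := image_inf_normalizer hF hΘiso hVle1 (hCP i) hΘVset
    apply SetLike.ext'
    rw [coe_imgSub]
    rw [show ((c i : Subgroup S) : Set S)
      = ((star (V ⊔ c i) ⊓ (Subgroup.normalizer ((V : Subgroup S) : Set S)) : Subgroup S) : Set S) from
      congrArg (fun (K : Subgroup S) => (K : Set S)) hspec.symm]
    rw [hinf]
    rfl
  -- the key recovery identity
  have hkey : ∀ i, imgSub Θ (star (V ⊔ c i)) (hmΘ.mono (hCP i)) = star (V ⊔ m i) := by
    intro i
    have h1 := imgSub_star hF hΩ hΘiso hP hQ (D := V ⊔ c i) (hVci i)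
    have hsup := imgSub_sup (f := Θ) hmΘ hVle1 (hciP i)
    have h2a : imgSub Θ V (hmΘ.mono hVle1) = V := SetLike.ext' hΘVset
    have h2 : imgSub Θ (V ⊔ c i) (hmΘ.mono (sup_le hVle1 (hciP i))) = V ⊔ m i := by
      rw [hsup, h2a, hci_img i]
    have h3 : imgSub Θ (V ⊔ c i) ((mulOn_of hF hΘiso.1).mono (hVci i)) = V ⊔ m i := h2
    rw [h3] at h1
    exact h1
  -- membership of the transported chain in the bullet Omega
  have hmmem : ∀ i, m i ∈ bulletOmega star V := by
    intro i
    refine ⟨m i, inf_le_right, ?_⟩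
    show m i = star (V ⊔ m i) ⊓ (Subgroup.normalizer ((V : Subgroup S) : Set S))
    rw [← hkey i]
  -- strict monotonicity
  have hmstrict : StrictMono m := by
    intro i j hij
    have hlt := beta_lt hΩ (hcΩ i) (hcΩ j) (hc hij)
    have hle : imgSub Θ (star (V ⊔ c i)) (hmΘ.mono (hCP i))
        ≤ imgSub Θ (star (V ⊔ c j)) (hmΘ.mono (hCP j)) := imgSub_mono hlt.le
    have hne : imgSub Θ (star (V ⊔ c i)) (hmΘ.mono (hCP i))
        ≠ imgSub Θ (star (V ⊔ c j)) (hmΘ.mono (hCP j)) := by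
      intro he
      obtain ⟨x, hxj, hxi⟩ := SetLike.exists_of_lt hlt
      have h1 : Θ x ∈ imgSub Θ (star (V ⊔ c i)) (hmΘ.mono (hCP i)) := by
        rw [he]; exact ⟨x, hxj, rfl⟩
      obtain ⟨y, hy, hyx⟩ := h1
      have : y = x := hF.injOn Θ _ _ hΘiso.1 (hCP i hy) (hCP j hxj) hyx
      exact hxi (this ▸ hy)
    refine lt_of_le_of_ne (inf_le_inf_right _ hle) ?_
    intro he
    apply hne
    rw [hkey i, hkey j]
    have : star (V ⊔ m i) = star (V ⊔ m j) := by rw [he]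
    exact this
  -- the endpoint
  have hlastC : star (V ⊔ c (Fin.last n)) = star (Subgroup.normalizer ((U : Subgroup S) : Set S)) := by
    rw [hlast]
    have e1 : star (Subgroup.normalizer ((U : Subgroup S) : Set S)) ⊓ (Subgroup.normalizer ((V : Subgroup S) : Set S)) = bulletStar star V (Subgroup.normalizer ((U : Subgroup S) : Set S)) := by
      show _ = star (V ⊔ (Subgroup.normalizer ((U : Subgroup S) : Set S))) ⊓ (Subgroup.normalizer ((V : Subgroup S) : Set S))
      rw [hs1]
    rw [e1, bullet_star_sup hΩ hNU, hs1]
  have hmlast : m (Fin.last n) = star NN ⊓ (Subgroup.normalizer ((V : Subgroup S) : Set S)) := by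
    have himglast : imgSub Θ (star (V ⊔ c (Fin.last n))) (hmΘ.mono (hCP _)) = star NN := by
      apply SetLike.ext'
      rw [coe_imgSub]
      rw [show ((star (V ⊔ c (Fin.last n)) : Subgroup S) : Set S)
        = ((star (Subgroup.normalizer ((U : Subgroup S) : Set S)) : Subgroup S) : Set S) from
        congrArg (fun (K : Subgroup S) => (K : Set S)) hlastC]
      exact hΘiso.2
    show imgSub Θ (star (V ⊔ c (Fin.last n))) (hmΘ.mono (hCP _)) ⊓ (Subgroup.normalizer ((V : Subgroup S) : Set S)) = _
    rw [himglast]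
  have hle_T : m (Fin.last n) ≤ star (Subgroup.normalizer ((X'' : Subgroup S) : Set S)) ⊓ (Subgroup.normalizer ((V : Subgroup S) : Set S)) := by
    rw [hmlast]
    exact inf_le_inf_right _ (star_mono' hΩ hNNle)
  have hnmem : n ∈ endSet (bulletOmega star V) (m (Fin.last n)) :=
    ⟨m, hmstrict, hmmem, rfl⟩
  rcases eq_or_lt_of_le hle_T with heq | hlt
  · rw [heq] at hnmem
    exact le_dimEnd hbddN hnmem
  · have h1 := succ_mem_endSet hnmem hT2 hlt
    have h2 := le_dimEnd hbddN h1
    omega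
end

section
/- Let (F,Ω,⋆) be a stratified fusion system on a group S, let Γ be an F-closed set of subgroups of S such that F is Γ-inductive, and let X ≤ S be a subgroup with X⋆ ∈ Γ. Assume that X⋆ is fully normalized in (F,Ω,⋆), that X is fully normalized in N_F(X⋆), and that the fusion system N_F(X⋆) is inductive. Then X is fully normalized in (F,Ω,⋆) and X is normalizer-inductive in F. -/
variable {S : Type*} [Group S]

/- ================= auxiliary development ================= -/

section Aux


variable {S : Type*} [Group S]

theorem fs_map_one {T : Subgroup S} {E : HomPred S} (hE : IsFusionSystem T E)
    {f : S → S} {X Y : Subgroup S} (hf : E f X Y) : f 1 = 1 := by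
  have h := hE.map_mul' f X Y hf 1 X.one_mem 1 X.one_mem
  rw [one_mul] at h
  exact left_eq_mul.mp h

theorem fs_map_inv {T : Subgroup S} {E : HomPred S} (hE : IsFusionSystem T E)
    {f : S → S} {X Y : Subgroup S} (hf : E f X Y) {a : S} (ha : a ∈ X) :
    f a⁻¹ = (f a)⁻¹ := by
  have h := hE.map_mul' f X Y hf a ha a⁻¹ (X.inv_mem ha)
  rw [mul_inv_cancel, fs_map_one hE hf] at h
  exact eq_inv_of_mul_eq_one_right h.symm

/-- The image subgroup `closure (f '' A)`. -/
def isub (f : S → S) (A : Subgroup S) : Subgroup S := Subgroup.closure (f '' (A : Set S))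

theorem isub_coe {T : Subgroup S} {E : HomPred S} (hE : IsFusionSystem T E)
    {f : S → S} {X Y A : Subgroup S} (hf : E f X Y) (hA : A ≤ X) :
    ((isub f A : Subgroup S) : Set S) = f '' (A : Set S) := by
  let Z : Subgroup S :=
    { carrier := f '' (A : Set S)
      one_mem' := ⟨1, A.one_mem, fs_map_one hE hf⟩
      mul_mem' := by
        rintro _ _ ⟨a, ha, rfl⟩ ⟨b, hb, rfl⟩
        exact ⟨a * b, A.mul_mem ha hb,
          hE.map_mul' f X Y hf a (hA ha) b (hA hb)⟩
      inv_mem' := by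
        rintro _ ⟨a, ha, rfl⟩
        exact ⟨a⁻¹, A.inv_mem ha, fs_map_inv hE hf (hA ha)⟩ }
  have hZ : (Z : Set S) = f '' (A : Set S) := rfl
  have : isub f A = Z := by rw [isub, ← hZ, Subgroup.closure_eq]
  rw [this]; exact hZ

theorem isub_mono {f : S → S} {A B : Subgroup S} (h : A ≤ B) : isub f A ≤ isub f B :=
  Subgroup.closure_mono (Set.image_mono h)

theorem mem_isub {f : S → S} {A : Subgroup S} {a : S} (ha : a ∈ A) : f a ∈ isub f A :=
  Subgroup.subset_closure ⟨a, ha, rfl⟩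

theorem isub_le {f : S → S} {A B : Subgroup S} (h : f '' (A : Set S) ⊆ (B : Set S)) :
    isub f A ≤ B := (Subgroup.closure_le B).mpr h

theorem isub_congr {f g : S → S} {A : Subgroup S} (h : Set.EqOn f g (A : Set S)) :
    isub f A = isub g A := by unfold isub; rw [h.image_eq]

theorem isub_eq_of_image_eq {f : S → S} {A B : Subgroup S}
    (h : f '' (A : Set S) = (B : Set S)) : isub f A = B := by
  unfold isub; rw [h, Subgroup.closure_eq]

theorem iso_cor {T : Subgroup S} {E : HomPred S} (hE : IsFusionSystem T E)
    {f : S → S} {X Y : Subgroup S} (hf : E f X Y) : IsFIso E f X (isub f X) :=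
  ⟨hE.corestrict_mem f X Y hf, (isub_coe hE hf le_rfl).symm⟩

theorem iso_restrict {T : Subgroup S} {E : HomPred S} (hE : IsFusionSystem T E)
    {f : S → S} {X Y A : Subgroup S} (hf : E f X Y) (hA : A ≤ X) :
    IsFIso E f A (isub f A) := by
  have h1 : E f A Y := hE.restrict_mem f X Y A Y hf hA le_rfl
    ((hE.mapsTo f X Y hf).mono_left hA)
  exact iso_cor hE h1

theorem iso_comp {T : Subgroup S} {E : HomPred S} (hE : IsFusionSystem T E)
    {f g : S → S} {X Y Z : Subgroup S} (hf : IsFIso E f X Y) (hg : IsFIso E g Y Z) :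
    IsFIso E (g ∘ f) X Z :=
  ⟨hE.comp_mem f g X Y Z hf.1 hg.1, by rw [Set.image_comp, hf.2, hg.2]⟩

theorem inv_image_set {f g : S → S} {A B : Set S}
    (hfg : ∀ x ∈ A, g (f x) = x) (hAB : f '' A = B) : g '' B = A := by
  ext z
  constructor
  · rintro ⟨b, hb, rfl⟩
    rw [← hAB] at hb
    obtain ⟨a, ha, rfl⟩ := hb
    rw [hfg a ha]; exact ha
  · intro hz
    exact ⟨f z, hAB ▸ ⟨z, hz, rfl⟩, hfg z hz⟩

theorem iso_inv {T : Subgroup S} {E : HomPred S} (hE : IsFusionSystem T E)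
    {f : S → S} {X Y : Subgroup S} (hf : IsFIso E f X Y) :
    ∃ g, IsFIso E g Y X ∧ (∀ x ∈ X, g (f x) = x) ∧ (∀ y ∈ Y, f (g y) = y) := by
  obtain ⟨g, hg, hgf⟩ := hE.inv_mem f X Y hf.1
  have hc : Subgroup.closure (f '' (X : Set S)) = Y := by
    rw [hf.2, Subgroup.closure_eq]
  rw [hc] at hg
  have himg : g '' (Y : Set S) = (X : Set S) := inv_image_set hgf hf.2
  refine ⟨g, ⟨hg, himg⟩, hgf, ?_⟩
  intro y hy
  have : y ∈ f '' (X : Set S) := hf.2 ▸ hy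
  obtain ⟨x, hx, rfl⟩ := this
  rw [hgf x hx]

theorem fconj_symm {T : Subgroup S} {E : HomPred S} (hE : IsFusionSystem T E)
    {X Y : Subgroup S} (h : Y ∈ FConj E X) : X ∈ FConj E Y := by
  obtain ⟨f, hf⟩ := h
  obtain ⟨g, hg, -⟩ := iso_inv hE hf
  exact ⟨g, hg⟩

theorem fconj_trans {T : Subgroup S} {E : HomPred S} (hE : IsFusionSystem T E)
    {X Y Z : Subgroup S} (h1 : Y ∈ FConj E X) (h2 : Z ∈ FConj E Y) : Z ∈ FConj E X := by
  obtain ⟨f, hf⟩ := h1; obtain ⟨g, hg⟩ := h2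
  exact ⟨g ∘ f, iso_comp hE hf hg⟩

/-- Transport of normalizer membership along a homomorphism. -/
theorem norm_transport {T : Subgroup S} {E : HomPred S} (hE : IsFusionSystem T E)
    {h : S → S} {M N A A' : Subgroup S} (hh : E h M N) (hAM : A ≤ M)
    (hA' : h '' (A : Set S) = (A' : Set S)) {u : S} (huM : u ∈ M)
    (hu : u ∈ Subgroup.normalizer (A : Set S)) : h u ∈ Subgroup.normalizer (A' : Set S) := by
  rw [Subgroup.mem_normalizer_iff] at hu ⊢
  intro n
  constructor
  · intro hn
    have hn' : n ∈ h '' (A : Set S) := by rw [hA']; exact hn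
    obtain ⟨a, ha, rfl⟩ := hn'
    have h1 : h u * h a * (h u)⁻¹ = h (u * a * u⁻¹) := by
      rw [← fs_map_inv hE hh huM,
        ← hE.map_mul' h M N hh u huM a (hAM ha),
        ← hE.map_mul' h M N hh (u * a) (M.mul_mem huM (hAM ha)) u⁻¹ (M.inv_mem huM)]
    rw [h1]
    have h2 : u * a * u⁻¹ ∈ A := (hu a).mp ha
    have : h (u * a * u⁻¹) ∈ h '' (A : Set S) := ⟨_, h2, rfl⟩
    rw [hA'] at this; exact this
  · intro hn
    have hn' : h u * n * (h u)⁻¹ ∈ h '' (A : Set S) := by rw [hA']; exact hn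
    obtain ⟨a, ha, heq⟩ := hn'
    have hA2 : u⁻¹ * a * u ∈ A := by
      have := (hu (u⁻¹ * a * u)).mpr
      apply this
      have : u * (u⁻¹ * a * u) * u⁻¹ = a := by group
      rw [this]; exact ha
    have h1 : n = h (u⁻¹ * a * u) := by
      have e1 : n = (h u)⁻¹ * (h u * n * (h u)⁻¹) * h u := by group
      rw [e1, ← heq,
        ← fs_map_inv hE hh huM,
        ← hE.map_mul' h M N hh u⁻¹ (M.inv_mem huM) a (hAM ha),
        ← hE.map_mul' h M N hh (u⁻¹ * a) (M.mul_mem (M.inv_mem huM) (hAM ha)) u huM]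
    rw [h1]
    have : h (u⁻¹ * a * u) ∈ h '' (A : Set S) := ⟨_, hA2, rfl⟩
    rw [hA'] at this; exact this




/-! ### dimension lemmas -/

theorem dimEnd_bddAbove {Ω' : Set (Subgroup S)} {N : ℕ}
    (hbd : ∀ n : ℕ, (∃ c : Fin (n + 1) → Subgroup S, StrictMono c ∧ ∀ i, c i ∈ Ω') → n ≤ N)
    (A : Subgroup S) :
    BddAbove {n | ∃ c : Fin (n + 1) → Subgroup S,
      StrictMono c ∧ (∀ i, c i ∈ Ω') ∧ c (Fin.last n) = A} := by
  refine ⟨N, fun n hn => ?_⟩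
  obtain ⟨c, hc1, hc2, -⟩ := hn
  exact hbd n ⟨c, hc1, hc2⟩

theorem dimEnd_nonempty {Ω' : Set (Subgroup S)} {A : Subgroup S} (hA : A ∈ Ω') :
    (0 : ℕ) ∈ {n | ∃ c : Fin (n + 1) → Subgroup S,
      StrictMono c ∧ (∀ i, c i ∈ Ω') ∧ c (Fin.last n) = A} := by
  refine ⟨fun _ => A, ?_, fun _ => hA, rfl⟩
  intro i j hij
  have hi := i.isLt
  have hj := j.isLt
  have hij' := Fin.lt_def.mp hij
  omega

theorem dimEnd_lt_dimEnd {Ω' : Set (Subgroup S)} {N : ℕ}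
    (hbd : ∀ n : ℕ, (∃ c : Fin (n + 1) → Subgroup S, StrictMono c ∧ ∀ i, c i ∈ Ω') → n ≤ N)
    {A B : Subgroup S} (hA : A ∈ Ω') (hB : B ∈ Ω') (hAB : A < B) :
    dimEnd Ω' A < dimEnd Ω' B := by
  obtain ⟨c, hc1, hc2, hc3⟩ :
      dimEnd Ω' A ∈ {n | ∃ c : Fin (n + 1) → Subgroup S,
        StrictMono c ∧ (∀ i, c i ∈ Ω') ∧ c (Fin.last n) = A} :=
    Nat.sSup_mem ⟨0, dimEnd_nonempty hA⟩ (dimEnd_bddAbove hbd A)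
  have key : dimEnd Ω' A + 1 ∈ {m | ∃ c : Fin (m + 1) → Subgroup S,
      StrictMono c ∧ (∀ i, c i ∈ Ω') ∧ c (Fin.last m) = B} := by
    refine ⟨fun i => if h : (i : ℕ) < dimEnd Ω' A + 1 then c ⟨i, h⟩ else B, ?_, ?_, ?_⟩
    · intro i j hij
      have hijv : (i : ℕ) < (j : ℕ) := Fin.lt_def.mp hij
      by_cases hi : (i : ℕ) < dimEnd Ω' A + 1
      · by_cases hj : (j : ℕ) < dimEnd Ω' A + 1
        · simp only [dif_pos hi, dif_pos hj]
          exact hc1 (Fin.mk_lt_mk.mpr hijv)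
        · simp only [dif_pos hi, dif_neg hj]
          calc c ⟨(i : ℕ), hi⟩ ≤ c (Fin.last (dimEnd Ω' A)) := hc1.monotone (Fin.le_last _)
            _ = A := hc3
            _ < B := hAB
      · exfalso
        have h2 : (j : ℕ) < dimEnd Ω' A + 2 := j.isLt
        omega
    · intro i
      by_cases hi : (i : ℕ) < dimEnd Ω' A + 1
      · simp only [dif_pos hi]; exact hc2 _
      · simp only [dif_neg hi]; exact hB
    · have h3 : ¬ ((Fin.last (dimEnd Ω' A + 1) : ℕ) < dimEnd Ω' A + 1) := by simp
      simp only [dif_neg h3]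
  have h1 : dimEnd Ω' A + 1 ≤ dimEnd Ω' B := le_csSup (dimEnd_bddAbove hbd B) key
  omega

theorem dimEnd_le_dimEnd {Ω' : Set (Subgroup S)} {N : ℕ}
    (hbd : ∀ n : ℕ, (∃ c : Fin (n + 1) → Subgroup S, StrictMono c ∧ ∀ i, c i ∈ Ω') → n ≤ N)
    {A B : Subgroup S} (hA : A ∈ Ω') (hB : B ∈ Ω') (hAB : A ≤ B) :
    dimEnd Ω' A ≤ dimEnd Ω' B := by
  rcases eq_or_lt_of_le hAB with h | h
  · rw [h]
  · exact le_of_lt (dimEnd_lt_dimEnd hbd hA hB h)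

theorem dimEnd_eq_of_lt_imp {Ω' : Set (Subgroup S)} {N : ℕ}
    (hbd : ∀ n : ℕ, (∃ c : Fin (n + 1) → Subgroup S, StrictMono c ∧ ∀ i, c i ∈ Ω') → n ≤ N)
    {A B : Subgroup S} (hA : A ∈ Ω') (hB : B ∈ Ω') (hAB : A ≤ B)
    (hdim : dimEnd Ω' B ≤ dimEnd Ω' A) : A = B := by
  rcases eq_or_lt_of_le hAB with h | h
  · exact h
  · exact absurd (dimEnd_lt_dimEnd hbd hA hB h) (not_lt.mpr hdim)

/-- chains transport along isomorphisms. -/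
theorem dimEnd_subset_of_iso {T : Subgroup S} {E : HomPred S} (hE : IsFusionSystem T E)
    {Ω' : Set (Subgroup S)}
    (hconj : ∀ A ∈ Ω', ∀ f B, IsFIso E f A B → B ∈ Ω')
    {g : S → S} {A B : Subgroup S} (hiso : IsFIso E g A B) :
    {n | ∃ c : Fin (n + 1) → Subgroup S,
      StrictMono c ∧ (∀ i, c i ∈ Ω') ∧ c (Fin.last n) = A} ⊆
    {n | ∃ c : Fin (n + 1) → Subgroup S,
      StrictMono c ∧ (∀ i, c i ∈ Ω') ∧ c (Fin.last n) = B} := by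
  rintro n ⟨c, hc1, hc2, hc3⟩
  have hcA : ∀ i, c i ≤ A := fun i => hc3 ▸ hc1.monotone (Fin.le_last i)
  have hinj : Set.InjOn g (A : Set S) := hE.injOn g A B hiso.1
  refine ⟨fun i => isub g (c i), ?_, ?_, ?_⟩
  · intro i j hij
    show isub g (c i) < isub g (c j)
    have hlt : c i < c j := hc1 hij
    have hle : isub g (c i) ≤ isub g (c j) := isub_mono (le_of_lt hlt)
    refine lt_of_le_of_ne hle ?_
    intro hEq
    have h1 : ((isub g (c i) : Subgroup S) : Set S) = g '' ((c i : Subgroup S) : Set S) :=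
      isub_coe hE hiso.1 (hcA i)
    have h2 : ((isub g (c j) : Subgroup S) : Set S) = g '' ((c j : Subgroup S) : Set S) :=
      isub_coe hE hiso.1 (hcA j)
    have himg : g '' ((c i : Subgroup S) : Set S) = g '' ((c j : Subgroup S) : Set S) := by
      rw [← h1, ← h2, hEq]
    have hsets : ((c i : Subgroup S) : Set S) = ((c j : Subgroup S) : Set S) := by
      apply Set.Subset.antisymm
      · exact SetLike.coe_subset_coe.mpr (le_of_lt hlt)
      · exact (Set.InjOn.image_subset_image_iff hinj (SetLike.coe_subset_coe.mpr (hcA j))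
          (SetLike.coe_subset_coe.mpr (hcA i))).mp (le_of_eq himg.symm)
    exact (ne_of_lt hlt) (SetLike.coe_injective hsets)
  · intro i
    exact hconj (c i) (hc2 i) g (isub g (c i)) (iso_restrict hE hiso.1 (hcA i))
  · show isub g (c (Fin.last n)) = B
    rw [hc3]
    exact isub_eq_of_image_eq hiso.2

theorem dimEnd_eq_of_iso {T : Subgroup S} {E : HomPred S} (hE : IsFusionSystem T E)
    {Ω' : Set (Subgroup S)}
    (hconj : ∀ A ∈ Ω', ∀ f B, IsFIso E f A B → B ∈ Ω')
    {g : S → S} {A B : Subgroup S} (hiso : IsFIso E g A B) :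
    dimEnd Ω' A = dimEnd Ω' B := by
  obtain ⟨g', hg'iso, -, -⟩ := iso_inv hE hiso
  have h1 := dimEnd_subset_of_iso hE hconj hiso
  have h2 := dimEnd_subset_of_iso hE hconj hg'iso
  unfold dimEnd
  rw [Set.Subset.antisymm h1 h2]

/-! ### conjugation lemmas -/

theorem conj_image_of_mem_normalizer {V : Subgroup S} {g : S} (hg : g ∈ Subgroup.normalizer (V : Set S)) :
    (fun x => g⁻¹ * x * g) '' (V : Set S) = (V : Set S) := by
  ext z
  constructor
  · rintro ⟨v, hv, rfl⟩
    have h1 := Subgroup.mem_normalizer_iff.mp ((Subgroup.normalizer (V : Set S)).inv_mem hg) v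
    simpa using h1.mp hv
  · intro hz
    refine ⟨g * z * g⁻¹, (Subgroup.mem_normalizer_iff.mp hg z).mp hz, by group⟩

theorem conj_hom_top {F : HomPred S} (hF : IsFusionSystem ⊤ F) (g : S) (A : Subgroup S) :
    F (fun x => g⁻¹ * x * g) A ⊤ :=
  hF.conj_mem g (Subgroup.mem_top g) A ⊤ le_top le_top (fun x _ => Subgroup.mem_top _)

/-! ### join-image lemma -/

theorem isub_sup {T : Subgroup S} {E : HomPred S} (hE : IsFusionSystem T E)
    {f : S → S} {X Y A B : Subgroup S} (hf : E f X Y) (hA : A ≤ X) (hB : B ≤ X) :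
    isub f (A ⊔ B) = isub f A ⊔ isub f B := by
  apply le_antisymm
  · apply isub_le
    rintro _ ⟨x, hx, rfl⟩
    have hsup : A ⊔ B = Subgroup.closure ((A : Set S) ∪ (B : Set S)) := by
      rw [Subgroup.closure_union, Subgroup.closure_eq, Subgroup.closure_eq]
    have hx' : x ∈ Subgroup.closure ((A : Set S) ∪ (B : Set S)) := by
      rw [← hsup]; exact hx
    have key : x ∈ X ∧ f x ∈ isub f A ⊔ isub f B := by
      refine Subgroup.closure_induction ?_ ?_ ?_ ?_ hx'
      · intro z hz
        rcases hz with hz | hz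
        · exact ⟨hA hz, SetLike.le_def.mp le_sup_left (mem_isub hz)⟩
        · exact ⟨hB hz, SetLike.le_def.mp le_sup_right (mem_isub hz)⟩
      · exact ⟨X.one_mem, by rw [fs_map_one hE hf]; exact Subgroup.one_mem _⟩
      · intro a b _ _ iha ihb
        exact ⟨X.mul_mem iha.1 ihb.1, by
          rw [hE.map_mul' f X Y hf a iha.1 b ihb.1]
          exact Subgroup.mul_mem _ iha.2 ihb.2⟩
      · intro a _ iha
        exact ⟨X.inv_mem iha.1, by
          rw [fs_map_inv hE hf iha.1]
          exact Subgroup.inv_mem _ iha.2⟩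
    exact key.2
  · exact sup_le (isub_mono le_sup_left) (isub_mono le_sup_right)


/-! ### the star-transport lemma -/

theorem star_transport {F : HomPred S} {Ω : Set (Subgroup S)} {star : Subgroup S → Subgroup S}
    (hF : IsFusionSystem ⊤ F) (hΩ : IsStratification ⊤ F Ω star)
    {g : S → S} {M N D : Subgroup S} (hiso : IsFIso F g M N)
    (hM : M ∈ Ω) (hN : N ∈ Ω) (hD : D ≤ M) :
    isub g (star D) = star (isub g D) := by
  have hsDM : star D ≤ M := by
    have := hΩ.star_mono D M le_top le_top hD
    rwa [hΩ.star_fix M hM] at this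
  have iso₁ : IsFIso F g (star D) (isub g (star D)) := iso_restrict hF hiso.1 hsDM
  have hA₁ : isub g (star D) ∈ Ω :=
    hΩ.conj_invariant (star D) (hΩ.star_mem D le_top) g _ iso₁
  have h1 : star (isub g D) ≤ isub g (star D) := by
    have hle : isub g D ≤ isub g (star D) := isub_mono (hΩ.le_star D le_top)
    have := hΩ.star_mono (isub g D) (isub g (star D)) le_top le_top hle
    rwa [hΩ.star_fix _ hA₁] at this
  obtain ⟨g', hg'iso, hgf', hfg'⟩ := iso_inv hF hiso
  have hsubDN : isub g D ≤ N := by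
    apply isub_le
    rintro _ ⟨d, hd, rfl⟩
    exact hiso.2 ▸ ⟨d, hD hd, rfl⟩
  have hB₁N : star (isub g D) ≤ N := by
    have := hΩ.star_mono (isub g D) N le_top le_top hsubDN
    rwa [hΩ.star_fix N hN] at this
  have iso₂ : IsFIso F g' (star (isub g D)) (isub g' (star (isub g D))) :=
    iso_restrict hF hg'iso.1 hB₁N
  have hA₂ : isub g' (star (isub g D)) ∈ Ω :=
    hΩ.conj_invariant _ (hΩ.star_mem _ le_top) g' _ iso₂
  have hDA₂ : D ≤ isub g' (star (isub g D)) := by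
    intro d hd
    have h2 : g d ∈ star (isub g D) := hΩ.le_star _ le_top (mem_isub hd)
    have h3 : g' (g d) ∈ isub g' (star (isub g D)) := mem_isub h2
    rwa [hgf' d (hD hd)] at h3
  have hsDA₂ : star D ≤ isub g' (star (isub g D)) := by
    have := hΩ.star_mono D _ le_top le_top hDA₂
    rwa [hΩ.star_fix _ hA₂] at this
  have h2 : isub g (star D) ≤ star (isub g D) := by
    refine le_trans (isub_mono hsDA₂) ?_
    apply isub_le
    have hcoe : ((isub g' (star (isub g D)) : Subgroup S) : Set S)
        = g' '' ((star (isub g D) : Subgroup S) : Set S) := isub_coe hF hg'iso.1 hB₁N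
    rw [hcoe]
    rintro _ ⟨_, ⟨b, hb, rfl⟩, rfl⟩
    rw [hfg' b (hB₁N hb)]
    exact hb
  exact le_antisymm h2 h1

/-- the normalizer of `U` is contained in the normalizer of `U⋆`. -/
theorem normalizer_le_star_normalizer {F : HomPred S} {Ω : Set (Subgroup S)}
    {star : Subgroup S → Subgroup S}
    (hF : IsFusionSystem ⊤ F) (hΩ : IsStratification ⊤ F Ω star) (U : Subgroup S) :
    Subgroup.normalizer (U : Set S) ≤ Subgroup.normalizer (star U : Set S) := by
  have claim1 : ∀ k ∈ Subgroup.normalizer (U : Set S),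
      ((star U : Subgroup S) : Set S) ⊆ (fun x => k⁻¹ * x * k) '' ((star U : Subgroup S) : Set S) := by
    intro k hk
    set c : S → S := fun x => k⁻¹ * x * k with hc
    have hiso : IsFIso F c (star U) (isub c (star U)) :=
      iso_cor hF (conj_hom_top hF k (star U))
    have hB : isub c (star U) ∈ Ω :=
      hΩ.conj_invariant (star U) (hΩ.star_mem U le_top) c _ hiso
    have hUB : U ≤ isub c (star U) := by
      intro u hu
      have h1 : k * u * k⁻¹ ∈ U := (Subgroup.mem_normalizer_iff.mp hk u).mp hu
      have h2 : c (k * u * k⁻¹) ∈ isub c (star U) :=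
        mem_isub (hΩ.le_star U le_top h1)
      have h3 : c (k * u * k⁻¹) = u := by simp only [hc]; group
      rwa [h3] at h2
    have h4 : star U ≤ isub c (star U) := by
      have := hΩ.star_mono U _ le_top le_top hUB
      rwa [hΩ.star_fix _ hB] at this
    intro x hx
    have h5 := h4 hx
    rwa [← isub_coe hF (conj_hom_top hF k (star U)) le_rfl]
  have claim2 : ∀ k ∈ Subgroup.normalizer (U : Set S),
      (fun x => k⁻¹ * x * k) '' ((star U : Subgroup S) : Set S) ⊆ ((star U : Subgroup S) : Set S) := by
    intro k hk
    rintro _ ⟨x, hx, rfl⟩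
    have h5 := claim1 k⁻¹ ((Subgroup.normalizer (U : Set S)).inv_mem hk) hx
    obtain ⟨y, hy, hxy⟩ := h5
    have h6 : k⁻¹ * x * k = y := by
      rw [← hxy]; group
    show k⁻¹ * x * k ∈ ((star U : Subgroup S) : Set S)
    rw [h6]; exact hy
  intro g hg
  rw [Subgroup.mem_normalizer_iff]
  intro n
  constructor
  · intro hn
    have := claim2 g⁻¹ ((Subgroup.normalizer (U : Set S)).inv_mem hg) ⟨n, hn, rfl⟩
    simpa using this
  · intro hn
    have h7 : g⁻¹ * (g * n * g⁻¹) * g = n := by group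
    have h8 : n ∈ ((star U : Subgroup S) : Set S) :=
      claim2 g hg ⟨g * n * g⁻¹, hn, h7⟩
    exact h8

/-! ### the generated fusion system -/

theorem genFS_isFusion {R : Subgroup S} {F Φ : HomPred S} (hF : IsFusionSystem ⊤ F)
    (hΦ : ∀ f X Y, Φ f X Y → X ≤ R ∧ Y ≤ R ∧ F f X Y) :
    IsFusionSystem R (GenFS R F Φ) ∧
      (∀ f X Y, GenFS R F Φ f X Y → X ≤ R ∧ Y ≤ R ∧ F f X Y) ∧
      (∀ f X Y, Φ f X Y → GenFS R F Φ f X Y) := by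
  set E₀ : HomPred S := fun f X Y => X ≤ R ∧ Y ≤ R ∧ F f X Y with hE₀def
  have hE₀ : IsFusionSystem R E₀ := by
    constructor
    · exact fun f X Y h => ⟨h.1, h.2.1⟩
    · exact fun f X Y h => hF.mapsTo f X Y h.2.2
    · exact fun f X Y h => hF.injOn f X Y h.2.2
    · exact fun f X Y h => hF.map_mul' f X Y h.2.2
    · exact fun f g X Y h heq => ⟨h.1, h.2.1, hF.of_eqOn f g X Y h.2.2 heq⟩
    · exact fun g hg X Y hX hY hcond =>
        ⟨hX, hY, hF.conj_mem g (Subgroup.mem_top g) X Y le_top le_top hcond⟩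
    · exact fun f g X Y Z hf hg => ⟨hf.1, hg.2.1, hF.comp_mem f g X Y Z hf.2.2 hg.2.2⟩
    · exact fun f X Y X₀ Y₀ hf hX₀ hY₀ hm =>
        ⟨le_trans hX₀ hf.1, le_trans hY₀ hf.2.1,
          hF.restrict_mem f X Y X₀ Y₀ hf.2.2 hX₀ hY₀ hm⟩
    · intro f X Y hf
      refine ⟨hf.1, ?_, hF.corestrict_mem f X Y hf.2.2⟩
      apply (Subgroup.closure_le R).mpr
      rintro _ ⟨x, hx, rfl⟩
      exact hf.2.1 (hF.mapsTo f X Y hf.2.2 hx)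
    · intro f X Y hf
      obtain ⟨g, hg, hgf⟩ := hF.inv_mem f X Y hf.2.2
      refine ⟨g, ⟨?_, hf.1, hg⟩, hgf⟩
      apply (Subgroup.closure_le R).mpr
      rintro _ ⟨x, hx, rfl⟩
      exact hf.2.1 (hF.mapsTo f X Y hf.2.2 hx)
  have hmem : ∀ f X Y, GenFS R F Φ f X Y → E₀ f X Y := by
    intro f X Y h
    exact h E₀ hE₀ (fun _ _ _ hh => hh.2.2) (fun g A B hg => hΦ g A B hg)
  refine ⟨?_, fun f X Y h => hmem f X Y h, fun f X Y h E hE h1 h2 => h2 f X Y h⟩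
  constructor
  · exact fun f X Y h => ⟨(hmem f X Y h).1, (hmem f X Y h).2.1⟩
  · exact fun f X Y h => hF.mapsTo f X Y (hmem f X Y h).2.2
  · exact fun f X Y h => hF.injOn f X Y (hmem f X Y h).2.2
  · exact fun f X Y h => hF.map_mul' f X Y (hmem f X Y h).2.2
  · exact fun f g X Y h heq E hE h1 h2 => hE.of_eqOn f g X Y (h E hE h1 h2) heq
  · exact fun g hg X Y hX hY hcond E hE h1 h2 => hE.conj_mem g hg X Y hX hY hcond
  · exact fun f g X Y Z hf hg E hE h1 h2 =>
      hE.comp_mem f g X Y Z (hf E hE h1 h2) (hg E hE h1 h2)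
  · exact fun f X Y X₀ Y₀ hf hX₀ hY₀ hm E hE h1 h2 =>
      hE.restrict_mem f X Y X₀ Y₀ (hf E hE h1 h2) hX₀ hY₀ hm
  · exact fun f X Y hf E hE h1 h2 => hE.corestrict_mem f X Y (hf E hE h1 h2)
  · intro f X Y h
    have h₀ := hmem f X Y h
    obtain ⟨g₀, hg₀, hg₀f⟩ := hF.inv_mem f X Y h₀.2.2
    refine ⟨g₀, ?_, hg₀f⟩
    intro E hE h1 h2
    have hfE : E f X Y := h E hE h1 h2
    obtain ⟨gE, hgE, hgEf⟩ := hE.inv_mem f X Y hfE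
    apply hE.of_eqOn gE g₀ _ X hgE
    have hcoe : ((Subgroup.closure (f '' (X : Set S)) : Subgroup S) : Set S)
        = f '' (X : Set S) := isub_coe hE hfE le_rfl
    intro z hz
    rw [hcoe] at hz
    obtain ⟨x, hx, rfl⟩ := hz
    rw [hg₀f x hx, hgEf x hx]


/-! ### the key generic lemma (Lemma 2.11) -/

theorem normalizerInductive_of_fullyNormalized {T : Subgroup S} {E : HomPred S}
    {Ω' : Set (Subgroup S)} {st : Subgroup S → Subgroup S} {N₀ : ℕ}
    (hE : IsFusionSystem T E)
    (hmem : ∀ A : Subgroup S, A ≤ T → st A ∈ Ω')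
    (hle : ∀ A : Subgroup S, A ≤ T → A ≤ st A)
    (hmono : ∀ A B : Subgroup S, A ≤ T → B ≤ T → A ≤ B → st A ≤ st B)
    (hfix : ∀ A ∈ Ω', st A = A)
    (hΩT : ∀ A ∈ Ω', A ≤ T)
    (hbd : ∀ n : ℕ, (∃ c : Fin (n + 1) → Subgroup S, StrictMono c ∧ ∀ i, c i ∈ Ω') → n ≤ N₀)
    (hconj : ∀ A ∈ Ω', ∀ f B, IsFIso E f A B → B ∈ Ω')
    (hext : ∀ f X Y, IsFIso E f X Y →
      ∃ g, IsFIso E g (st X) (st Y) ∧ Set.EqOn g f (X : Set S))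
    {Y : Subgroup S} (hY : Y ≤ T)
    (hfn : FullyNormalizedIn T E Ω' st Y)
    {W : Subgroup S} (hW : W ∈ FConj E Y) (hWni : NormalizerInductive T E W) :
    NormalizerInductive T E Y := by
  obtain ⟨f₀, hf₀⟩ := hW
  have hWT : W ≤ T := (hE.le_base f₀ Y W hf₀.1).2
  have hYW : Y ∈ FConj E W := fconj_symm hE ⟨f₀, hf₀⟩
  obtain ⟨χ, hχ, hχY⟩ := hWni Y hYW
  set NY := Subgroup.normalizer (Y : Set S) ⊓ T with hNYdef
  set NW := Subgroup.normalizer (W : Set S) ⊓ T with hNWdef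
  have hNYT : NY ≤ T := inf_le_right
  have hNWT : NW ≤ T := inf_le_right
  have hisoP : IsFIso E χ NY (isub χ NY) := iso_cor hE hχ
  have hPNW : isub χ NY ≤ NW := isub_le (hE.mapsTo χ NY NW hχ).image_subset
  have hPT : isub χ NY ≤ T := le_trans hPNW hNWT
  obtain ⟨g, hgiso, hgeq⟩ := hext χ NY (isub χ NY) hisoP
  -- dimension computation
  have d1 : dimEnd Ω' (st NY) = dimEnd Ω' (st (isub χ NY)) :=
    dimEnd_eq_of_iso hE hconj hgiso
  have d2 : dimEnd Ω' (st (isub χ NY)) ≤ dimEnd Ω' (st NW) :=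
    dimEnd_le_dimEnd hbd (hmem _ hPT) (hmem _ hNWT) (hmono _ _ hPT hNWT hPNW)
  have d3 : dimEnd Ω' (st NW) ≤ dimEnd Ω' (st NY) := hfn W ⟨f₀, hf₀⟩
  have heqst : st (isub χ NY) = st NW := by
    apply dimEnd_eq_of_lt_imp hbd (hmem _ hPT) (hmem _ hNWT)
      (hmono _ _ hPT hNWT hPNW)
    omega
  rw [heqst] at hgiso
  obtain ⟨g', hg'iso, hg'g, hgg'⟩ := iso_inv hE hgiso
  -- basic containments
  have hYNY : Y ≤ NY := le_inf Subgroup.le_normalizer hY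
  have hWNW : W ≤ NW := le_inf Subgroup.le_normalizer hWT
  have hNYst : NY ≤ st NY := hle NY hNYT
  have hNWst : NW ≤ st NW := hle NW hNWT
  have hYst : Y ≤ st NY := le_trans hYNY hNYst
  have hWst : W ≤ st NW := le_trans hWNW hNWst
  -- g maps Y onto W, g' maps W onto Y
  have hgY : g '' (Y : Set S) = (W : Set S) := by
    have h1 : g '' (Y : Set S) = χ '' (Y : Set S) :=
      Set.EqOn.image_eq (hgeq.mono (SetLike.coe_subset_coe.mpr hYNY))
    rw [h1, hχY]
  have hg'W : g' '' (W : Set S) = (Y : Set S) := by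
    refine inv_image_set (fun x hx => hg'g x (hYst hx)) hgY
  -- g' maps NW into NY
  have hmapsg' : Set.MapsTo g' (NW : Set S) (NY : Set S) := by
    intro u hu
    have huW : u ∈ Subgroup.normalizer (W : Set S) := (Subgroup.mem_inf.mp hu).1
    have hust : u ∈ st NW := hNWst hu
    have h1 : g' u ∈ st NY := hE.mapsTo g' (st NW) (st NY) hg'iso.1 hust
    have h2 : g' u ∈ T := hΩT (st NY) (hmem NY hNYT) h1
    have h3 : g' u ∈ Subgroup.normalizer (Y : Set S) :=
      norm_transport hE hg'iso.1 hWst hg'W hust huW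
    exact Subgroup.mem_inf.mpr ⟨h3, h2⟩
  have hρ : E g' NW NY :=
    hE.restrict_mem g' (st NW) (st NY) NW NY hg'iso.1 hNWst hNYst hmapsg'
  -- conclude
  intro U hU
  have hUW : U ∈ FConj E W := fconj_trans hE hYW hU
  obtain ⟨χU, hχU, hχUW⟩ := hWni U hUW
  refine ⟨g' ∘ χU, hE.comp_mem χU g' _ NW NY hχU hρ, ?_⟩
  rw [Set.image_comp, hχUW, hg'W]


/-! ### extension property for morphisms of `N_F(V)` -/

/-- Every morphism of `N_F(V)` extends to an `F`-isomorphism `(VX)⋆ → (V·f(X))⋆`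
mapping `V` onto `V`. -/
def PExt (F : HomPred S) (star : Subgroup S → Subgroup S) (V : Subgroup S) : HomPred S :=
  fun f X _Y => ∃ g, IsFIso F g (star (V ⊔ X)) (star (V ⊔ isub f X)) ∧
    Set.EqOn g f (X : Set S) ∧ g '' (V : Set S) = (V : Set S)

theorem nfus_ext {F : HomPred S} {Ω : Set (Subgroup S)} {star : Subgroup S → Subgroup S}
    (hF : IsFusionSystem ⊤ F) (hΩ : IsStratification ⊤ F Ω star) (V : Subgroup S) :
    (IsFusionSystem (Subgroup.normalizer (V : Set S)) (NFus F V)) ∧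
    (∀ f X Y, NFus F V f X Y → X ≤ Subgroup.normalizer (V : Set S) ∧ Y ≤ Subgroup.normalizer (V : Set S) ∧ F f X Y) ∧
    (∀ f X Y, NPhi F V f X Y → NFus F V f X Y) ∧
    (∀ f X Y, NFus F V f X Y → PExt F star V f X Y) := by
  have hNPhi_sub : ∀ f X Y, NPhi F V f X Y →
      X ≤ Subgroup.normalizer (V : Set S) ∧ Y ≤ Subgroup.normalizer (V : Set S) ∧ F f X Y :=
    fun f X Y h => ⟨h.1, h.2.1, h.2.2.1.1⟩
  obtain ⟨hNE, hNF, hNΦ⟩ := genFS_isFusion hF hNPhi_sub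
  refine ⟨hNE, hNF, hNΦ, ?_⟩
  set EP : HomPred S := fun f X Y => NFus F V f X Y ∧ PExt F star V f X Y with hEPdef
  have hEP : IsFusionSystem (Subgroup.normalizer (V : Set S)) EP := by
    constructor
    · exact fun f X Y h => hNE.le_base f X Y h.1
    · exact fun f X Y h => hNE.mapsTo f X Y h.1
    · exact fun f X Y h => hNE.injOn f X Y h.1
    · exact fun f X Y h => hNE.map_mul' f X Y h.1
    -- of_eqOn
    · intro f g X Y h heq
      refine ⟨hNE.of_eqOn f g X Y h.1 heq, ?_⟩
      obtain ⟨w, hwiso, hweq, hwV⟩ := h.2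
      refine ⟨w, ?_, fun x hx => (hweq hx).trans (heq hx).symm, hwV⟩
      rw [isub_congr heq]
      exact hwiso
    -- conj_mem
    · intro g hgR X Y hXR hYR hcond
      refine ⟨hNE.conj_mem g hgR X Y hXR hYR hcond, ?_⟩
      set c : S → S := fun x => g⁻¹ * x * g with hc
      have hconjV : c '' (V : Set S) = (V : Set S) := conj_image_of_mem_normalizer hgR
      have hhom : F c (V ⊔ X) ⊤ := conj_hom_top hF g (V ⊔ X)
      have hM : star (V ⊔ X) ∈ Ω := hΩ.star_mem _ le_top
      have hisoM : IsFIso F c (star (V ⊔ X)) (isub c (star (V ⊔ X))) :=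
        iso_cor hF (conj_hom_top hF g (star (V ⊔ X)))
      have hN : isub c (star (V ⊔ X)) ∈ Ω := hΩ.conj_invariant _ hM c _ hisoM
      have hTL : isub c (star (V ⊔ X)) = star (isub c (V ⊔ X)) :=
        star_transport hF hΩ hisoM hM hN (hΩ.le_star _ le_top)
      have hsup : isub c (V ⊔ X) = V ⊔ isub c X :=
        (isub_sup hF hhom le_sup_left le_sup_right).trans
          (by rw [isub_eq_of_image_eq hconjV])
      refine ⟨c, ?_, fun x _ => rfl, hconjV⟩
      have : IsFIso F c (star (V ⊔ X)) (star (isub c (V ⊔ X))) := hTL ▸ hisoM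
      rwa [hsup] at this
    -- comp_mem
    · intro f h X Y Z hfP hhP
      obtain ⟨hNf, wf, hwfiso, hwfeq, hwfV⟩ := hfP
      obtain ⟨hNh, wh, hwhiso, hwheq, hwhV⟩ := hhP
      refine ⟨hNE.comp_mem f h X Y Z hNf hNh, ?_⟩
      have hFf : F f X Y := (hNF f X Y hNf).2.2
      have hIfY : isub f X ≤ Y := isub_le (hF.mapsTo f X Y hFf).image_subset
      have hDVY : V ⊔ isub f X ≤ V ⊔ Y := sup_le_sup_left hIfY V
      have hDM : V ⊔ isub f X ≤ star (V ⊔ Y) :=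
        le_trans hDVY (hΩ.le_star _ le_top)
      have hVM : V ≤ star (V ⊔ Y) := le_trans le_sup_left (hΩ.le_star _ le_top)
      have hIM : isub f X ≤ star (V ⊔ Y) := le_trans (le_trans hIfY le_sup_right)
        (hΩ.le_star _ le_top)
      have hM : star (V ⊔ Y) ∈ Ω := hΩ.star_mem _ le_top
      have hN : star (V ⊔ isub h Y) ∈ Ω := hΩ.star_mem _ le_top
      have hTL : isub wh (star (V ⊔ isub f X)) = star (isub wh (V ⊔ isub f X)) :=
        star_transport hF hΩ hwhiso hM hN hDM
      have hIco : ((isub f X : Subgroup S) : Set S) = f '' (X : Set S) :=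
        isub_coe hF hFf le_rfl
      have himgeq : wh '' ((isub f X : Subgroup S) : Set S) = (h ∘ f) '' (X : Set S) := by
        rw [hIco, Set.image_comp]
        exact Set.EqOn.image_eq (hwheq.mono (by
          rw [← hIco]; exact SetLike.coe_subset_coe.mpr hIfY))
      have hsub1 : isub wh (V ⊔ isub f X) = V ⊔ isub (h ∘ f) X := by
        rw [isub_sup hF hwhiso.1 hVM hIM, isub_eq_of_image_eq hwhV]
        congr 1
        show Subgroup.closure _ = Subgroup.closure _
        rw [himgeq]
      have hstarle : star (V ⊔ isub f X) ≤ star (V ⊔ Y) :=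
        hΩ.star_mono _ _ le_top le_top hDVY
      have iso2 : IsFIso F wh (star (V ⊔ isub f X)) (isub wh (star (V ⊔ isub f X))) :=
        iso_restrict hF hwhiso.1 hstarle
      rw [hTL, hsub1] at iso2
      refine ⟨wh ∘ wf, iso_comp hF hwfiso iso2, ?_, ?_⟩
      · intro x hx
        have h1 : wf x = f x := hwfeq hx
        have h2 : f x ∈ (Y : Set S) := hF.mapsTo f X Y hFf hx
        show wh (wf x) = h (f x)
        rw [h1]
        exact hwheq h2
      · rw [Set.image_comp, hwfV, hwhV]
    -- restrict_mem
    · intro f X Y X₀ Y₀ hP hX₀ hY₀ hmaps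
      obtain ⟨hNf, wf, hwfiso, hwfeq, hwfV⟩ := hP
      refine ⟨hNE.restrict_mem f X Y X₀ Y₀ hNf hX₀ hY₀ hmaps, ?_⟩
      have hD : V ⊔ X₀ ≤ V ⊔ X := sup_le_sup_left hX₀ V
      have hDM : V ⊔ X₀ ≤ star (V ⊔ X) := le_trans hD (hΩ.le_star _ le_top)
      have hVM : V ≤ star (V ⊔ X) := le_trans le_sup_left (hΩ.le_star _ le_top)
      have hX₀M : X₀ ≤ star (V ⊔ X) := le_trans (le_trans hX₀ le_sup_right)
        (hΩ.le_star _ le_top)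
      have hM : star (V ⊔ X) ∈ Ω := hΩ.star_mem _ le_top
      have hN : star (V ⊔ isub f X) ∈ Ω := hΩ.star_mem _ le_top
      have hTL : isub wf (star (V ⊔ X₀)) = star (isub wf (V ⊔ X₀)) :=
        star_transport hF hΩ hwfiso hM hN hDM
      have hsub1 : isub wf (V ⊔ X₀) = V ⊔ isub f X₀ := by
        rw [isub_sup hF hwfiso.1 hVM hX₀M, isub_eq_of_image_eq hwfV,
          isub_congr (hwfeq.mono (SetLike.coe_subset_coe.mpr hX₀))]
      have hstarle : star (V ⊔ X₀) ≤ star (V ⊔ X) := hΩ.star_mono _ _ le_top le_top hD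
      have iso2 : IsFIso F wf (star (V ⊔ X₀)) (isub wf (star (V ⊔ X₀))) :=
        iso_restrict hF hwfiso.1 hstarle
      rw [hTL, hsub1] at iso2
      exact ⟨wf, iso2, hwfeq.mono (SetLike.coe_subset_coe.mpr hX₀), hwfV⟩
    -- corestrict_mem
    · intro f X Y hP
      exact ⟨hNE.corestrict_mem f X Y hP.1, hP.2⟩
    -- inv_mem
    · intro f X Y hP
      obtain ⟨hNf, wf, hwfiso, hwfeq, hwfV⟩ := hP
      obtain ⟨g₀, hg₀, hg₀f⟩ := hNE.inv_mem f X Y hNf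
      obtain ⟨wf', hwf'iso, hwf'w, hww'⟩ := iso_inv hF hwfiso
      have hXstar : X ≤ star (V ⊔ X) := le_trans le_sup_right (hΩ.le_star _ le_top)
      have hVstar : V ≤ star (V ⊔ X) := le_trans le_sup_left (hΩ.le_star _ le_top)
      have hFf : F f X Y := (hNF f X Y hNf).2.2
      have hIco : ((isub f X : Subgroup S) : Set S) = f '' (X : Set S) :=
        isub_coe hF hFf le_rfl
      have hinv_pt : ∀ x ∈ (X : Set S), wf' (f x) = x := by
        intro x hx
        rw [← hwfeq hx]
        exact hwf'w x (hXstar hx)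
      have hwfX : wf '' (X : Set S) = f '' (X : Set S) := hwfeq.image_eq
      have hNwf' : NFus F V wf' (isub f X) X := by
        apply hNE.of_eqOn g₀ wf' (isub f X) X hg₀
        intro z hz
        rw [hIco] at hz
        obtain ⟨x, hx, rfl⟩ := hz
        rw [hinv_pt x hx, hg₀f x hx]
      have himg : isub wf' (isub f X) = X := by
        apply isub_eq_of_image_eq
        rw [hIco]
        exact inv_image_set hinv_pt rfl
      have hwf'V : wf' '' (V : Set S) = (V : Set S) :=
        inv_image_set (fun v hv => hwf'w v (hVstar hv)) hwfV
      have hPwf' : PExt F star V wf' (isub f X) X :=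
        ⟨wf', by rw [himg]; exact hwf'iso, fun z _ => rfl, hwf'V⟩
      exact ⟨wf', ⟨hNwf', hPwf'⟩, fun x hx => hinv_pt x hx⟩
  -- EP is a member of the family defining GenFS
  have hEPF : ∀ g A B, EP g A B → F g A B := fun g A B h => (hNF g A B h.1).2.2
  have hΦEP : ∀ f X Y, NPhi F V f X Y → EP f X Y := by
    intro f X Y h
    obtain ⟨hXR, hYR, hisoXY, g₁, hg₁iso, hg₁eq, hg₁V⟩ := h
    refine ⟨hNΦ f X Y ⟨hXR, hYR, hisoXY, g₁, hg₁iso, hg₁eq, hg₁V⟩, ?_⟩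
    obtain ⟨gt, hgtiso, hgteq⟩ := hΩ.extend_star g₁ (X ⊔ V) (Y ⊔ V) hg₁iso
    have h1 : isub f X = Y := isub_eq_of_image_eq hisoXY.2
    refine ⟨gt, ?_, ?_, ?_⟩
    · rw [h1, sup_comm V X, sup_comm V Y]
      exact hgtiso
    · intro x hx
      have h2 : x ∈ ((X ⊔ V : Subgroup S) : Set S) :=
        SetLike.coe_subset_coe.mpr le_sup_left hx
      rw [hgteq h2]
      exact hg₁eq hx
    · have h3 : gt '' (V : Set S) = g₁ '' (V : Set S) :=
        Set.EqOn.image_eq (hgteq.mono (SetLike.coe_subset_coe.mpr le_sup_right))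
      rw [h3, hg₁V]
  exact fun f X Y h => (h EP hEP hEPF hΦEP).2

-- AUXCODE6

end Aux

/-- Lemma 2.12. Suppose `X⋆ ∈ Γ`, `X⋆` is fully normalized in `F`,
`X` is fully normalized in `N_F(X⋆)`, and `N_F(X⋆)` is inductive.  Then `X` is fully
normalized in `F` and normalizer-inductive in `F`. -/
theorem fullyNormalized_and_normalizerInductive_of_inductive_NF
    {S : Type*} [Group S] (F : HomPred S)
    (Ω : Set (Subgroup S)) (star : Subgroup S → Subgroup S)
    (hF : IsFusionSystem ⊤ F) (hΩ : IsStratification ⊤ F Ω star)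
    (Γ : Set (Subgroup S)) (hΓ : FClosed F Γ) (hind : GammaInductive ⊤ F Γ)
    (X : Subgroup S) (hXs : star X ∈ Γ)
    (h1 : FullyNormalizedIn ⊤ F Ω star (star X))
    (h2 : FullyNormalizedIn (Subgroup.normalizer (star X : Set S)) (NFus F (star X))
      (bulletOmega star (star X)) (bulletStar star (star X)) X)
    (h3 : InductiveFS (Subgroup.normalizer (star X : Set S)) (NFus F (star X))) :
    FullyNormalizedIn ⊤ F Ω star X ∧ NormalizerInductive ⊤ F X := by
  obtain ⟨hNE, hNF, hNΦ, hNExt⟩ := nfus_ext hF hΩ (star X)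
  obtain ⟨N₀, hbd⟩ := hΩ.finDim
  have hXV : X ≤ star X := hΩ.le_star X le_top
  have hVR : star X ≤ Subgroup.normalizer (star X : Set S) := Subgroup.le_normalizer
  have hXR : X ≤ Subgroup.normalizer (star X : Set S) := le_trans hXV hVR
  -- Step 1 : star X is normalizer-inductive in F
  obtain ⟨W, hWconj, hWni⟩ := hind (star X) hXs
  have hVni : NormalizerInductive ⊤ F (star X) :=
    normalizerInductive_of_fullyNormalized hF
      (fun A _ => hΩ.star_mem A le_top) (fun A _ => hΩ.le_star A le_top)
      (fun A B _ _ h => hΩ.star_mono A B le_top le_top h)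
      (fun A hA => hΩ.star_fix A hA) (fun A _ => le_top) hbd
      hΩ.conj_invariant hΩ.extend_star le_top h1 hWconj hWni
  -- basic facts about the bullet stratification
  have hble : ∀ A : Subgroup S, A ≤ Subgroup.normalizer (star X : Set S) →
      A ≤ bulletStar star (star X) A := fun A hA =>
    le_inf (le_trans le_sup_right (hΩ.le_star _ le_top)) hA
  have hbmem : ∀ A : Subgroup S, A ≤ Subgroup.normalizer (star X : Set S) →
      bulletStar star (star X) A ∈ bulletOmega star (star X) := fun A hA => ⟨A, hA, rfl⟩
  have hbmono : ∀ A B : Subgroup S, A ≤ Subgroup.normalizer (star X : Set S) → B ≤ Subgroup.normalizer (star X : Set S) →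
      A ≤ B → bulletStar star (star X) A ≤ bulletStar star (star X) B := by
    intro A B _ _ h
    exact inf_le_inf (hΩ.star_mono _ _ le_top le_top (sup_le_sup_left h _)) le_rfl
  have hbkey : ∀ A ∈ bulletOmega star (star X),
      (bulletStar star (star X) A = A) ∧ A ≤ Subgroup.normalizer (star X : Set S) ∧ star X ≤ A ∧
        A = star A ⊓ Subgroup.normalizer (star X : Set S) := by
    rintro A ⟨X₀, hX₀R, rfl⟩
    have hAeq : bulletStar star (star X) X₀
        = star (star X ⊔ X₀) ⊓ Subgroup.normalizer (star X : Set S) := rfl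
    have hVA : star X ≤ bulletStar star (star X) X₀ := by
      rw [hAeq]
      exact le_inf (le_trans le_sup_left (hΩ.le_star _ le_top)) hVR
    have hAR : bulletStar star (star X) X₀ ≤ Subgroup.normalizer (star X : Set S) := by
      rw [hAeq]; exact inf_le_right
    have hX₀A : X₀ ≤ bulletStar star (star X) X₀ := by
      rw [hAeq]
      exact le_inf (le_trans le_sup_right (hΩ.le_star _ le_top)) hX₀R
    have hstarA : star (bulletStar star (star X) X₀) = star (star X ⊔ X₀) := by
      apply le_antisymm
      · have h1 := hΩ.star_mono (bulletStar star (star X) X₀) (star (star X ⊔ X₀))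
          le_top le_top (by rw [hAeq]; exact inf_le_left)
        rwa [hΩ.star_fix _ (hΩ.star_mem _ le_top)] at h1
      · exact hΩ.star_mono _ _ le_top le_top (sup_le hVA hX₀A)
    have hAfix : bulletStar star (star X) X₀
        = star (bulletStar star (star X) X₀) ⊓ Subgroup.normalizer (star X : Set S) := by
      rw [hstarA]; exact hAeq
    refine ⟨?_, hAR, hVA, hAfix⟩
    show star (star X ⊔ bulletStar star (star X) X₀) ⊓ Subgroup.normalizer (star X : Set S)
        = bulletStar star (star X) X₀
    rw [sup_eq_right.mpr hVA, ← hAfix]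
  have hbfix : ∀ A ∈ bulletOmega star (star X), bulletStar star (star X) A = A :=
    fun A hA => (hbkey A hA).1
  have hbΩR : ∀ A ∈ bulletOmega star (star X), A ≤ Subgroup.normalizer (star X : Set S) :=
    fun A hA => (hbkey A hA).2.1
  have hbbd : ∀ n : ℕ, (∃ c : Fin (n + 1) → Subgroup S,
      StrictMono c ∧ ∀ i, c i ∈ bulletOmega star (star X)) → n ≤ N₀ := by
    rintro n ⟨c, hc1, hc2⟩
    apply hbd n
    refine ⟨fun i => star (c i), ?_, fun i => hΩ.star_mem _ le_top⟩
    intro i j hij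
    have h1 : c i < c j := hc1 hij
    show star (c i) < star (c j)
    refine lt_of_le_of_ne (hΩ.star_mono _ _ le_top le_top h1.le) ?_
    intro hEq
    have e1 := (hbkey _ (hc2 i)).2.2.2
    have e2 := (hbkey _ (hc2 j)).2.2.2
    have hcc : c i = c j := by rw [e1, e2, hEq]
    exact absurd hcc (ne_of_lt h1)
  -- conjugacy invariance of the bullet Omega
  have hbconj : ∀ A ∈ bulletOmega star (star X), ∀ f B,
      IsFIso (NFus F (star X)) f A B → B ∈ bulletOmega star (star X) := by
    intro A hA f B hiso
    obtain ⟨hbullA, hAR, hVA, hAfix⟩ := hbkey A hA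
    have hNfXY := hiso.1
    obtain ⟨g, hgiso, hgeq, hgV⟩ := hNExt f A B hNfXY
    have hsupA : star X ⊔ A = A := sup_eq_right.mpr hVA
    have hIB : isub f A = B := isub_eq_of_image_eq hiso.2
    rw [hsupA, hIB] at hgiso
    have hVstarA : star X ≤ star A := le_trans hVA (hΩ.le_star _ le_top)
    have hVB : star X ≤ B := by
      intro v hv
      have hv' : v ∈ g '' ((star X : Subgroup S) : Set S) := by rw [hgV]; exact hv
      obtain ⟨w, hw, rfl⟩ := hv'
      have h2 : g w = f w := hgeq (hVA hw)
      rw [h2]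
      have h4 : f w ∈ f '' ((A : Subgroup S) : Set S) := ⟨w, hVA hw, rfl⟩
      rw [hiso.2] at h4
      exact h4
    have hsupB : star X ⊔ B = B := sup_eq_right.mpr hVB
    rw [hsupB] at hgiso
    have hBR : B ≤ Subgroup.normalizer (star X : Set S) := (hNE.le_base f A B hNfXY).2
    obtain ⟨g', hg'iso, hg'g, hgg'⟩ := iso_inv hF hgiso
    have hg'V : g' '' ((star X : Subgroup S) : Set S) = ((star X : Subgroup S) : Set S) :=
      inv_image_set (fun v hv => hg'g v (hVstarA hv)) hgV
    have hVstarB : star X ≤ star B := le_trans hVB (hΩ.le_star _ le_top)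
    have hBeq : B = star B ⊓ Subgroup.normalizer (star X : Set S) := by
      apply le_antisymm
      · exact le_inf (hΩ.le_star _ le_top) hBR
      · intro u hu
        obtain ⟨huS, huR⟩ := Subgroup.mem_inf.mp hu
        have h5 : u ∈ g '' ((star A : Subgroup S) : Set S) := by
          rw [hgiso.2]; exact huS
        obtain ⟨a, ha, rfl⟩ := h5
        have hmemB : g a ∈ star B := by
          have hx : g a ∈ g '' ((star A : Subgroup S) : Set S) := ⟨a, ha, rfl⟩
          rw [hgiso.2] at hx
          exact hx
        have ha' : g' (g a) ∈ Subgroup.normalizer (star X : Set S) :=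
          norm_transport hF hg'iso.1 hVstarB hg'V hmemB huR
        rw [hg'g a ha] at ha'
        have haA : a ∈ A := by
          rw [hAfix]
          exact Subgroup.mem_inf.mpr ⟨ha, ha'⟩
        have h6 : g a = f a := hgeq haA
        rw [h6]
        have h7 : f a ∈ f '' ((A : Subgroup S) : Set S) := ⟨a, haA, rfl⟩
        rw [hiso.2] at h7
        exact h7
    refine ⟨B, hBR, ?_⟩
    show B = star (star X ⊔ B) ⊓ Subgroup.normalizer (star X : Set S)
    rw [hsupB, ← hBeq]
  -- extension property for the bullet star
  have hbext : ∀ f A B, IsFIso (NFus F (star X)) f A B →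
      ∃ h, IsFIso (NFus F (star X)) h (bulletStar star (star X) A)
        (bulletStar star (star X) B) ∧ Set.EqOn h f (A : Set S) := by
    intro f A B hiso
    have hNf := hiso.1
    have hAR : A ≤ Subgroup.normalizer (star X : Set S) := (hNE.le_base f A B hNf).1
    have hBR : B ≤ Subgroup.normalizer (star X : Set S) := (hNE.le_base f A B hNf).2
    obtain ⟨g, hgiso, hgeq, hgV⟩ := hNExt f A B hNf
    have hIB : isub f A = B := isub_eq_of_image_eq hiso.2
    rw [hIB] at hgiso
    obtain ⟨g', hg'iso, hg'g, hgg'⟩ := iso_inv hF hgiso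
    have hVA' : star X ≤ star (star X ⊔ A) := le_trans le_sup_left (hΩ.le_star _ le_top)
    have hVB' : star X ≤ star (star X ⊔ B) := le_trans le_sup_left (hΩ.le_star _ le_top)
    have hg'V : g' '' ((star X : Subgroup S) : Set S) = ((star X : Subgroup S) : Set S) :=
      inv_image_set (fun v hv => hg'g v (hVA' hv)) hgV
    have himg : g '' ((bulletStar star (star X) A : Subgroup S) : Set S)
        = ((bulletStar star (star X) B : Subgroup S) : Set S) := by
      apply Set.Subset.antisymm
      · rintro _ ⟨a, ha, rfl⟩
        obtain ⟨haS, haR⟩ := Subgroup.mem_inf.mp ha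
        exact Subgroup.mem_inf.mpr ⟨hF.mapsTo g _ _ hgiso.1 haS,
          norm_transport hF hgiso.1 hVA' hgV haS haR⟩
      · intro b hb
        obtain ⟨hbS, hbR⟩ := Subgroup.mem_inf.mp hb
        refine ⟨g' b, ?_, hgg' b hbS⟩
        exact Subgroup.mem_inf.mpr ⟨hF.mapsTo g' _ _ hg'iso.1 hbS,
          norm_transport hF hg'iso.1 hVB' hg'V hbS hbR⟩
    have hA'R : bulletStar star (star X) A ≤ Subgroup.normalizer (star X : Set S) := inf_le_right
    have hB'R : bulletStar star (star X) B ≤ Subgroup.normalizer (star X : Set S) := inf_le_right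
    have hVA'' : star X ≤ bulletStar star (star X) A := le_inf hVA' hVR
    have hVB'' : star X ≤ bulletStar star (star X) B := le_inf hVB' hVR
    have hmapsg : Set.MapsTo g ((bulletStar star (star X) A : Subgroup S) : Set S)
        ((bulletStar star (star X) B : Subgroup S) : Set S) := by
      intro a ha
      have hx : g a ∈ g '' ((bulletStar star (star X) A : Subgroup S) : Set S) :=
        ⟨a, ha, rfl⟩
      rw [himg] at hx
      exact hx
    have hFres : F g (bulletStar star (star X) A) (bulletStar star (star X) B) :=
      hF.restrict_mem g (star (star X ⊔ A)) (star (star X ⊔ B)) _ _ hgiso.1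
        inf_le_left inf_le_left hmapsg
    have hisoF : IsFIso F g (bulletStar star (star X) A) (bulletStar star (star X) B) :=
      ⟨hFres, himg⟩
    have hnphi : NPhi F (star X) g (bulletStar star (star X) A)
        (bulletStar star (star X) B) := by
      refine ⟨hA'R, hB'R, hisoF, g, ?_, fun x _ => rfl, hgV⟩
      rw [sup_eq_left.mpr hVA'', sup_eq_left.mpr hVB'']
      exact hisoF
    exact ⟨g, ⟨hNΦ _ _ _ hnphi, himg⟩, hgeq⟩
  -- Step 2 : X is normalizer-inductive in N_F(star X)
  obtain ⟨W', hW'conj, hW'ni⟩ := h3 X hXR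
  have hXniE : NormalizerInductive (Subgroup.normalizer (star X : Set S)) (NFus F (star X)) X :=
    normalizerInductive_of_fullyNormalized hNE hbmem hble hbmono hbfix hbΩR hbbd
      hbconj hbext hXR h2 hW'conj hW'ni
  -- Step 3 : main construction
  have main : ∀ U ∈ FConj F X, ∃ ρ, F ρ (Subgroup.normalizer (U : Set S) ⊓ ⊤) (Subgroup.normalizer (X : Set S) ⊓ ⊤) ∧
      ρ '' (U : Set S) = (X : Set S) := by
    intro U hU
    obtain ⟨φ, hφ⟩ := hU
    obtain ⟨φb, hφbiso, hφbeq⟩ := hΩ.extend_star φ X U hφ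
    obtain ⟨ψ, hψ, hψU⟩ := hVni (star U) ⟨φb, hφbiso⟩
    have hUle : U ≤ star U := hΩ.le_star U le_top
    have hUNU' : U ≤ Subgroup.normalizer (star U : Set S) ⊓ ⊤ :=
      le_inf (le_trans Subgroup.le_normalizer (normalizer_le_star_normalizer hF hΩ U))
        le_top
    have hsUNU' : star U ≤ Subgroup.normalizer (star U : Set S) ⊓ ⊤ :=
      le_inf Subgroup.le_normalizer le_top
    have hisoψ : IsFIso F ψ (star U) (star X) := by
      refine ⟨hF.restrict_mem ψ _ _ (star U) (star X) hψ hsUNU'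
        (le_inf Subgroup.le_normalizer le_top) ?_, hψU⟩
      intro u hu
      rw [← hψU]
      exact ⟨u, hu, rfl⟩
    have hκiso : IsFIso F (ψ ∘ φb) (star X) (star X) := iso_comp hF hφbiso hisoψ
    have hφbX : φb '' (X : Set S) = (U : Set S) := by rw [hφbeq.image_eq, hφ.2]
    have hκX : (ψ ∘ φb) '' (X : Set S) = ψ '' (U : Set S) := by
      rw [Set.image_comp, hφbX]
    have hU'co : ((isub ψ U : Subgroup S) : Set S) = ψ '' (U : Set S) :=
      isub_coe hF hψ hUNU'
    have hU'V : isub ψ U ≤ star X := by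
      apply isub_le
      rintro _ ⟨u, hu, rfl⟩
      rw [← hψU]
      exact ⟨u, hUle hu, rfl⟩
    have hU'R : isub ψ U ≤ Subgroup.normalizer (star X : Set S) := le_trans hU'V hVR
    have hisoXU' : IsFIso F (ψ ∘ φb) X (isub ψ U) := by
      refine ⟨hF.restrict_mem _ (star X) (star X) X (isub ψ U) hκiso.1 hXV hU'V ?_,
        hκX.trans hU'co.symm⟩
      intro x hx
      have hmem : (ψ ∘ φb) x ∈ (ψ ∘ φb) '' (X : Set S) := ⟨x, hx, rfl⟩
      rw [hκX, ← hU'co] at hmem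
      exact hmem
    have hnphiκ : NPhi F (star X) (ψ ∘ φb) X (isub ψ U) := by
      refine ⟨hXR, hU'R, hisoXU', ψ ∘ φb, ?_, fun x _ => rfl, hκiso.2⟩
      rw [sup_eq_right.mpr hXV, sup_eq_right.mpr hU'V]
      exact hκiso
    have hU'conj : isub ψ U ∈ FConj (NFus F (star X)) X :=
      ⟨ψ ∘ φb, ⟨hNΦ _ _ _ hnphiκ, hisoXU'.2⟩⟩
    obtain ⟨χ, hχ, hχU'⟩ := hXniE (isub ψ U) hU'conj
    have hχF : F χ (Subgroup.normalizer (isub ψ U : Set S) ⊓ Subgroup.normalizer (star X : Set S))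
        (Subgroup.normalizer (X : Set S) ⊓ Subgroup.normalizer (star X : Set S)) := (hNF _ _ _ hχ).2.2
    have hψmaps : Set.MapsTo ψ ((Subgroup.normalizer (U : Set S) ⊓ ⊤ : Subgroup S) : Set S)
        ((Subgroup.normalizer (isub ψ U : Set S) ⊓ Subgroup.normalizer (star X : Set S) : Subgroup S) : Set S) := by
      intro u hu
      have huN : u ∈ Subgroup.normalizer (U : Set S) := (Subgroup.mem_inf.mp hu).1
      have huNU' : u ∈ Subgroup.normalizer (star U : Set S) ⊓ ⊤ := Subgroup.mem_inf.mpr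
        ⟨normalizer_le_star_normalizer hF hΩ U huN, Subgroup.mem_top u⟩
      have hmem1 : ψ u ∈ Subgroup.normalizer (star X : Set S) ⊓ ⊤ := hF.mapsTo ψ _ _ hψ huNU'
      have hmem2 : ψ u ∈ Subgroup.normalizer (isub ψ U : Set S) :=
        norm_transport hF hψ hUNU' hU'co.symm huNU' huN
      exact Subgroup.mem_inf.mpr ⟨hmem2, (Subgroup.mem_inf.mp hmem1).1⟩
    have hres : F ψ (Subgroup.normalizer (U : Set S) ⊓ ⊤) (Subgroup.normalizer (isub ψ U : Set S) ⊓ Subgroup.normalizer (star X : Set S)) :=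
      hF.restrict_mem ψ (Subgroup.normalizer (star U : Set S) ⊓ ⊤) (Subgroup.normalizer (star X : Set S) ⊓ ⊤) _ _ hψ
        (inf_le_inf (normalizer_le_star_normalizer hF hΩ U) le_rfl)
        (le_inf inf_le_right le_top) hψmaps
    have hcomp : F (χ ∘ ψ) (Subgroup.normalizer (U : Set S) ⊓ ⊤) (Subgroup.normalizer (X : Set S) ⊓ Subgroup.normalizer (star X : Set S)) :=
      hF.comp_mem ψ χ _ _ _ hres hχF
    have hincl : F (fun x => (1:S)⁻¹ * x * 1) (Subgroup.normalizer (X : Set S) ⊓ Subgroup.normalizer (star X : Set S))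
        (Subgroup.normalizer (X : Set S) ⊓ ⊤) := by
      apply hF.conj_mem 1 (Subgroup.mem_top 1) _ _ le_top le_top
      intro x hx
      have hxx : (1:S)⁻¹ * x * 1 = x := by group
      rw [hxx]
      exact Subgroup.mem_inf.mpr ⟨(Subgroup.mem_inf.mp hx).1, Subgroup.mem_top x⟩
    have hfinal0 : F ((fun x => (1:S)⁻¹ * x * 1) ∘ (χ ∘ ψ)) (Subgroup.normalizer (U : Set S) ⊓ ⊤)
        (Subgroup.normalizer (X : Set S) ⊓ ⊤) := hF.comp_mem _ _ _ _ _ hcomp hincl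
    have hfinal : F (χ ∘ ψ) (Subgroup.normalizer (U : Set S) ⊓ ⊤) (Subgroup.normalizer (X : Set S) ⊓ ⊤) := by
      apply hF.of_eqOn _ _ _ _ hfinal0
      intro x _
      show (χ ∘ ψ) x = (1:S)⁻¹ * ((χ ∘ ψ) x) * 1
      group
    have himgfinal : (χ ∘ ψ) '' (U : Set S) = (X : Set S) := by
      rw [Set.image_comp, ← hU'co, hχU']
    exact ⟨χ ∘ ψ, hfinal, himgfinal⟩
  constructor
  · intro U hU
    obtain ⟨ρ, hρ, -⟩ := main U hU
    have hisoD : IsFIso F ρ (Subgroup.normalizer (U : Set S) ⊓ ⊤) (isub ρ (Subgroup.normalizer (U : Set S) ⊓ ⊤)) :=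
      iso_cor hF hρ
    obtain ⟨g, hgiso, -⟩ := hΩ.extend_star ρ _ _ hisoD
    have hPD : isub ρ (Subgroup.normalizer (U : Set S) ⊓ ⊤) ≤ Subgroup.normalizer (X : Set S) ⊓ ⊤ :=
      isub_le (hF.mapsTo ρ _ _ hρ).image_subset
    have e1 : dimEnd Ω (star (Subgroup.normalizer (U : Set S) ⊓ ⊤))
        = dimEnd Ω (star (isub ρ (Subgroup.normalizer (U : Set S) ⊓ ⊤))) :=
      dimEnd_eq_of_iso hF hΩ.conj_invariant hgiso
    have e2 : dimEnd Ω (star (isub ρ (Subgroup.normalizer (U : Set S) ⊓ ⊤)))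
        ≤ dimEnd Ω (star (Subgroup.normalizer (X : Set S) ⊓ ⊤)) :=
      dimEnd_le_dimEnd hbd (hΩ.star_mem _ le_top) (hΩ.star_mem _ le_top)
        (hΩ.star_mono _ _ le_top le_top hPD)
    exact le_trans (le_of_eq e1) e2
  · exact main
end
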